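/- arXiv:1502.04497 — 5 statements merged into one kernel-verified Lean document; each statement's English description precedes it below -/
import Mathlib

section
/- Let A and B be n×n complex positive definite matrices, t ∈ [0,1], and let 0 < p ≤ p'. Then for each j ∈ {1,…,n}, λ_j(((1-t)A^p + tB^p)^{1/p}) ≤ λ_j(((1-t)A^{p'} + tB^{p'})^{1/p'}). -/
open scoped BigOperators ComplexOrder

/-- `f` applied to a Hermitian matrix via the functional calculus:
if `A = U diag(λᵢ) U*` then `herFun f A = U diag(f λᵢ) U*`
(junk value `0` if the matrix is not Hermitian). -/
noncomputable def herFun {n : ℕ} (f : ℝ → ℝ) (A : Matrix (Fin n) (Fin n) ℂ) :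
    Matrix (Fin n) (Fin n) ℂ :=
  if hA : A.IsHermitian then
    (hA.eigenvectorUnitary : Matrix (Fin n) (Fin n) ℂ) *
      Matrix.diagonal (fun i => (f (hA.eigenvalues i) : ℂ)) *
      (star hA.eigenvectorUnitary : Matrix (Fin n) (Fin n) ℂ)
  else 0

/-- Real matrix power `A^r` of a Hermitian (e.g. positive definite) matrix,
via the functional calculus. -/
noncomputable def mpow {n : ℕ} (A : Matrix (Fin n) (Fin n) ℂ) (r : ℝ) :
    Matrix (Fin n) (Fin n) ℂ :=
  herFun (fun x => x ^ r) A

/-- Matrix logarithm of a Hermitian (e.g. positive definite) matrix,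
via the functional calculus. -/
noncomputable def mlog {n : ℕ} (A : Matrix (Fin n) (Fin n) ℂ) :
    Matrix (Fin n) (Fin n) ℂ :=
  herFun Real.log A

/-- Matrix exponential. -/
noncomputable def mexp {n : ℕ} (A : Matrix (Fin n) (Fin n) ℂ) :
    Matrix (Fin n) (Fin n) ℂ :=
  NormedSpace.exp A

/-- The `t`-geometric mean `A #_t B = A^{1/2} (A^{-1/2} B A^{-1/2})^t A^{1/2}`. -/
noncomputable def gm {n : ℕ} (A B : Matrix (Fin n) (Fin n) ℂ) (t : ℝ) :
    Matrix (Fin n) (Fin n) ℂ :=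
  mpow A (1/2) * mpow (mpow A (-(1/2)) * B * mpow A (-(1/2))) t * mpow A (1/2)

/-- `eigVal A j` is the `j`-th eigenvalue (`j = 0, …, n-1`) of the Hermitian matrix `A`,
ordered decreasingly: `eigVal A 0 ≥ eigVal A 1 ≥ ⋯ ≥ eigVal A (n-1)`
(junk value `0` if `A` is not Hermitian).  Thus `λ_j` of the paper is `eigVal A (j-1)`. -/
noncomputable def eigVal {n : ℕ} (A : Matrix (Fin n) (Fin n) ℂ) (j : Fin n) : ℝ :=
  if hA : A.IsHermitian then (hA.eigenvalues ∘ Tuple.sort hA.eigenvalues) j.rev else 0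

/-- `prodTopEig A k = ∏_{j=1}^k λ_j(A)`, the product of the `k` largest eigenvalues
of the Hermitian matrix `A`. -/
noncomputable def prodTopEig {n : ℕ} (A : Matrix (Fin n) (Fin n) ℂ) (k : ℕ) : ℝ :=
  ∏ j ∈ Finset.univ.filter (fun j : Fin n => (j : ℕ) < k), eigVal A j

/-- A unitarily invariant norm on `n × n` complex matrices: a norm `N`
with `N (U * X * V) = N X` for all unitaries `U, V`. -/
structure UnitarilyInvariantNorm (n : ℕ) where
  N : Matrix (Fin n) (Fin n) ℂ → ℝ
  add_le : ∀ X Y, N (X + Y) ≤ N X + N Y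
  smul_eq : ∀ (c : ℂ) (X), N (c • X) = ‖c‖ * N X
  eq_zero : ∀ X, N X = 0 → X = 0
  invariant : ∀ U V : Matrix.unitaryGroup (Fin n) ℂ, ∀ X,
    N ((U : Matrix (Fin n) (Fin n) ℂ) * X * (V : Matrix (Fin n) (Fin n) ℂ)) = N X

namespace Stmt1Aux

open Matrix Polynomial Finset

variable {n : ℕ}

/-- `M = U D U*` with `D` the real diagonal `d`. -/
def IsDecomp (M : Matrix (Fin n) (Fin n) ℂ) (U : Matrix.unitaryGroup (Fin n) ℂ)
    (d : Fin n → ℝ) : Prop :=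
  M = (U : Matrix (Fin n) (Fin n) ℂ) * Matrix.diagonal (fun i => (d i : ℂ)) *
    (star U : Matrix (Fin n) (Fin n) ℂ)

lemma mul_star_self (U : Matrix.unitaryGroup (Fin n) ℂ) :
    (U : Matrix (Fin n) (Fin n) ℂ) * star (U : Matrix (Fin n) (Fin n) ℂ) = 1 :=
  Matrix.mem_unitaryGroup_iff.mp U.2

lemma star_self_mul (U : Matrix.unitaryGroup (Fin n) ℂ) :
    star (U : Matrix (Fin n) (Fin n) ℂ) * (U : Matrix (Fin n) (Fin n) ℂ) = 1 :=
  Matrix.mem_unitaryGroup_iff'.mp U.2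

lemma IsDecomp.isHermitian {M : Matrix (Fin n) (Fin n) ℂ} {U} {d : Fin n → ℝ}
    (h : IsDecomp M U d) : M.IsHermitian := by
  rw [h]
  have hd : (Matrix.diagonal (fun i => (d i : ℂ))).IsHermitian := by
    apply Matrix.isHermitian_diagonal_of_self_adjoint
    show star (fun i => ((d i : ℝ) : ℂ)) = _
    funext i
    exact Complex.conj_ofReal _
  simpa [Matrix.star_eq_conjTranspose] using
    Matrix.isHermitian_mul_mul_conjTranspose (U : Matrix (Fin n) (Fin n) ℂ) hd

lemma charmatrix_eq (M : Matrix (Fin n) (Fin n) ℂ) :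
    charmatrix M = Matrix.diagonal (fun _ => (X : ℂ[X])) - M.map (⇑(C : ℂ →+* ℂ[X])) := by
  ext i j
  rw [charmatrix_apply]
  simp [Matrix.sub_apply, Matrix.map_apply]

lemma charpoly_unitary_conj (U : Matrix.unitaryGroup (Fin n) ℂ)
    (Y : Matrix (Fin n) (Fin n) ℂ) :
    ((U : Matrix (Fin n) (Fin n) ℂ) * Y * star (U : Matrix (Fin n) (Fin n) ℂ)).charpoly
      = Y.charpoly := by
  classical
  set u : Matrix (Fin n) (Fin n) ℂ := ↑U with hu
  have h1 : u * star u = 1 := mul_star_self U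
  have hmap1 : u.map (⇑(C : ℂ →+* ℂ[X])) * (star u).map (⇑(C : ℂ →+* ℂ[X])) = 1 := by
    rw [← Matrix.map_mul, h1, Matrix.map_one _ (map_zero _) (map_one _)]
  have hcomm : ∀ M : Matrix (Fin n) (Fin n) ℂ[X],
      M * Matrix.diagonal (fun _ => (X : ℂ[X])) = Matrix.diagonal (fun _ => (X : ℂ[X])) * M := by
    intro M
    ext i j
    simp [Matrix.mul_diagonal, Matrix.diagonal_mul, mul_comm]
  have key : charmatrix (u * Y * star u)
      = u.map (⇑(C : ℂ →+* ℂ[X])) * charmatrix Y * (star u).map (⇑(C : ℂ →+* ℂ[X])) := by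
    rw [charmatrix_eq, charmatrix_eq, Matrix.map_mul, Matrix.map_mul]
    rw [mul_sub, sub_mul]
    congr 1
    rw [hcomm, mul_assoc, hmap1, mul_one]
  rw [Matrix.charpoly, Matrix.charpoly, key, Matrix.det_mul, Matrix.det_mul]
  have hdet : (u.map (⇑(C : ℂ →+* ℂ[X]))).det * ((star u).map (⇑(C : ℂ →+* ℂ[X]))).det = 1 := by
    rw [← Matrix.det_mul, hmap1, Matrix.det_one]
  calc (u.map (⇑(C : ℂ →+* ℂ[X]))).det * (charmatrix Y).det
        * ((star u).map (⇑(C : ℂ →+* ℂ[X]))).det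
      = (u.map (⇑(C : ℂ →+* ℂ[X]))).det * ((star u).map (⇑(C : ℂ →+* ℂ[X]))).det
        * (charmatrix Y).det := by ring
    _ = (charmatrix Y).det := by rw [hdet, one_mul]

lemma IsDecomp.charpoly {M : Matrix (Fin n) (Fin n) ℂ} {U} {d : Fin n → ℝ}
    (h : IsDecomp M U d) :
    M.charpoly = ∏ i, (X - C ((d i : ℂ))) := by
  rw [h, charpoly_unitary_conj,
    Matrix.charpoly_of_upperTriangular _ (Matrix.blockTriangular_diagonal _)]
  refine Finset.prod_congr rfl fun i _ => ?_
  rw [Matrix.diagonal_apply_eq]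

lemma roots_prod (a : Fin n → ℝ) :
    (∏ i, (X - C ((a i : ℂ)))).roots = Multiset.map (fun i => ((a i : ℂ))) univ.val := by
  rw [Finset.prod_eq_multiset_prod]
  have h : Multiset.map (fun i => X - C ((a i : ℂ))) univ.val
      = Multiset.map (fun z => X - C z) (Multiset.map (fun i => ((a i : ℂ))) univ.val) := by
    rw [Multiset.map_map]
    rfl
  rw [h, roots_multiset_prod_X_sub_C]

lemma isDecomp_spectral {M : Matrix (Fin n) (Fin n) ℂ} (hM : M.IsHermitian) :
    IsDecomp M hM.eigenvectorUnitary hM.eigenvalues := by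
  exact hM.spectral_theorem

lemma IsDecomp.multiset_eigenvalues {M : Matrix (Fin n) (Fin n) ℂ} {U} {d : Fin n → ℝ}
    (h : IsDecomp M U d) (hM : M.IsHermitian) :
    Multiset.map hM.eigenvalues univ.val = Multiset.map d univ.val := by
  have e1 := h.charpoly
  have e2 := (isDecomp_spectral hM).charpoly
  have h3 : Multiset.map (fun i => ((hM.eigenvalues i : ℂ))) univ.val
      = Multiset.map (fun i => ((d i : ℂ))) univ.val := by
    rw [← roots_prod, ← roots_prod, ← e1, ← e2]
  apply Multiset.map_injective Complex.ofReal_injective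
  rw [Multiset.map_map, Multiset.map_map]
  exact h3

lemma coe_ofFn (d : Fin n → ℝ) :
    (↑(List.ofFn d) : Multiset ℝ) = Multiset.map d univ.val := by
  rw [List.ofFn_eq_map, Fin.univ_def]
  rfl

lemma sorted_eq {d e : Fin n → ℝ}
    (h : Multiset.map d univ.val = Multiset.map e univ.val) :
    d ∘ ⇑(Tuple.sort d) = e ∘ ⇑(Tuple.sort e) := by
  apply List.ofFn_injective
  refine List.Perm.eq_of_sortedLE (Tuple.monotone_sort d).sortedLE_ofFn
    (Tuple.monotone_sort e).sortedLE_ofFn ?_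
  refine ((Tuple.sort d).ofFn_comp_perm d).trans
    (List.Perm.trans ?_ ((Tuple.sort e).ofFn_comp_perm e).symm)
  rw [← Multiset.coe_eq_coe, coe_ofFn, coe_ofFn, h]

lemma IsDecomp.eigVal_eq {M : Matrix (Fin n) (Fin n) ℂ} {U} {d : Fin n → ℝ}
    (h : IsDecomp M U d) (j : Fin n) :
    eigVal M j = (d ∘ ⇑(Tuple.sort d)) j.rev := by
  have hM := h.isHermitian
  rw [eigVal, dif_pos hM]
  exact congrFun (sorted_eq (h.multiset_eigenvalues hM)) j.rev

lemma sorted_comp_mono {d : Fin n → ℝ} {f : ℝ → ℝ} (hf : MonotoneOn f (Set.Ici 0))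
    (h0 : ∀ i, 0 ≤ d i) :
    (f ∘ d) ∘ ⇑(Tuple.sort (f ∘ d)) = f ∘ (d ∘ ⇑(Tuple.sort d)) := by
  have hm : Monotone (f ∘ (d ∘ ⇑(Tuple.sort d))) := fun i j hij =>
    hf (Set.mem_Ici.mpr (h0 _)) (Set.mem_Ici.mpr (h0 _)) (Tuple.monotone_sort d hij)
  apply List.ofFn_injective
  refine List.Perm.eq_of_sortedLE (Tuple.monotone_sort (f ∘ d)).sortedLE_ofFn hm.sortedLE_ofFn ?_
  have h2 : f ∘ (d ∘ ⇑(Tuple.sort d)) = (f ∘ d) ∘ ⇑(Tuple.sort d) := rfl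
  rw [h2]
  exact ((Tuple.sort (f ∘ d)).ofFn_comp_perm (f ∘ d)).trans
    ((Tuple.sort d).ofFn_comp_perm (f ∘ d)).symm

lemma isDecomp_herFun {M : Matrix (Fin n) (Fin n) ℂ} (hM : M.IsHermitian) (f : ℝ → ℝ) :
    IsDecomp (herFun f M) hM.eigenvectorUnitary (f ∘ hM.eigenvalues) := by
  unfold IsDecomp
  rw [herFun, dif_pos hM]
  rfl

lemma eigVal_herFun {M : Matrix (Fin n) (Fin n) ℂ} (hM : M.IsHermitian) {f : ℝ → ℝ}
    (hf : MonotoneOn f (Set.Ici 0)) (h0 : ∀ i, 0 ≤ hM.eigenvalues i) (j : Fin n) :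
    eigVal (herFun f M) j = f (eigVal M j) := by
  rw [(isDecomp_herFun hM f).eigVal_eq j, sorted_comp_mono hf h0, eigVal, dif_pos hM]
  rfl

lemma dot_star_self (x : Fin n → ℂ) :
    star x ⬝ᵥ x = ((∑ i, Complex.normSq (x i) : ℝ) : ℂ) := by
  show (∑ i, star (x i) * x i) = _
  push_cast
  refine Finset.sum_congr rfl fun i _ => ?_
  rw [Complex.star_def, mul_comm, Complex.mul_conj]

lemma quad_decomp {M : Matrix (Fin n) (Fin n) ℂ} {U} {d : Fin n → ℝ}
    (h : IsDecomp M U d) (v : Fin n → ℂ) :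
    star v ⬝ᵥ (M *ᵥ v) =
      ((∑ i, d i * Complex.normSq (((star (U : Matrix (Fin n) (Fin n) ℂ)) *ᵥ v) i) : ℝ) : ℂ) := by
  set u : Matrix (Fin n) (Fin n) ℂ := (U : Matrix (Fin n) (Fin n) ℂ) with hu
  set x : Fin n → ℂ := star u *ᵥ v with hx
  have hstar : star v ᵥ* u = star x := by
    rw [hx, Matrix.star_mulVec, Matrix.star_eq_conjTranspose, Matrix.conjTranspose_conjTranspose]
  have h1 : star v ⬝ᵥ (M *ᵥ v)
      = star x ⬝ᵥ (Matrix.diagonal (fun i => ((d i : ℂ))) *ᵥ x) := by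
    rw [h]
    rw [← Matrix.mulVec_mulVec, ← Matrix.mulVec_mulVec, Matrix.dotProduct_mulVec, hstar]
  rw [h1]
  show (∑ i, star (x i) * (Matrix.diagonal (fun i => ((d i : ℂ))) *ᵥ x) i) = _
  push_cast
  refine Finset.sum_congr rfl fun i _ => ?_
  rw [Matrix.mulVec_diagonal, Complex.star_def]
  rw [show (starRingEnd ℂ) (x i) * ((d i : ℂ) * x i) = (d i : ℂ) * (x i * (starRingEnd ℂ) (x i)) by ring,
    Complex.mul_conj]

lemma isDecomp_one (U : Matrix.unitaryGroup (Fin n) ℂ) :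
    IsDecomp (1 : Matrix (Fin n) (Fin n) ℂ) U (fun _ => 1) := by
  unfold IsDecomp
  have h : Matrix.diagonal (fun _ : Fin n => ((1 : ℝ) : ℂ)) = 1 := by
    simp
  rw [h, mul_one, mul_star_self U]

lemma sum_normSq_unitary (U : Matrix.unitaryGroup (Fin n) ℂ) (v : Fin n → ℂ) :
    ∑ i, Complex.normSq (((star (U : Matrix (Fin n) (Fin n) ℂ)) *ᵥ v) i)
      = ∑ i, Complex.normSq (v i) := by
  have h := quad_decomp (isDecomp_one U) v
  rw [Matrix.one_mulVec, dot_star_self] at h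
  have h2 := Complex.ofReal_injective h
  simpa using h2.symm

lemma star_mulVec_ne_zero (U : Matrix.unitaryGroup (Fin n) ℂ) {v : Fin n → ℂ} (hv : v ≠ 0) :
    (star (U : Matrix (Fin n) (Fin n) ℂ)) *ᵥ v ≠ 0 := by
  intro h0
  apply hv
  have : (U : Matrix (Fin n) (Fin n) ℂ) *ᵥ ((star (U : Matrix (Fin n) (Fin n) ℂ)) *ᵥ v) = v := by
    rw [Matrix.mulVec_mulVec, mul_star_self U, Matrix.one_mulVec]
  rw [h0, Matrix.mulVec_zero] at this
  exact this.symm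

lemma posDef_decomp {M : Matrix (Fin n) (Fin n) ℂ} {U} {d : Fin n → ℝ}
    (h : IsDecomp M U d) (hd : ∀ i, 0 < d i) : M.PosDef := by
  refine Matrix.PosDef.of_dotProduct_mulVec_pos h.isHermitian fun v hv => ?_
  rw [quad_decomp h v, Complex.zero_lt_real]
  have hx : (star (U : Matrix (Fin n) (Fin n) ℂ)) *ᵥ v ≠ 0 := star_mulVec_ne_zero U hv
  obtain ⟨i, hi⟩ := Function.ne_iff.mp hx
  refine Finset.sum_pos' (fun i _ => mul_nonneg (hd i).le (Complex.normSq_nonneg _))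
    ⟨i, Finset.mem_univ i, mul_pos (hd i) (Complex.normSq_pos.mpr hi)⟩

lemma eigVal_pos {M : Matrix (Fin n) (Fin n) ℂ} (hM : M.PosDef) (j : Fin n) :
    0 < eigVal M j := by
  rw [eigVal, dif_pos hM.1]
  exact hM.eigenvalues_pos _

lemma eigVal_nonneg_of_posDef {M : Matrix (Fin n) (Fin n) ℂ} (hM : M.PosDef) (j : Fin n) :
    0 ≤ eigVal M j := (eigVal_pos hM j).le

/-- at least `j+1` indices have eigenvalue `≥ eigVal M j`. -/
lemma card_top (d : Fin n → ℝ) (j : Fin n) :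
    (j : ℕ) < Fintype.card {i // (d ∘ ⇑(Tuple.sort d)) j.rev ≤ d i} := by
  classical
  set a := (d ∘ ⇑(Tuple.sort d)) j.rev with ha
  have e1 : {k : Fin n // a ≤ (d ∘ ⇑(Tuple.sort d)) k.rev} ≃ {i : Fin n // a ≤ d i} := by
    refine (Equiv.subtypeEquiv (Fin.revPerm.trans (Tuple.sort d)) fun k => Iff.rfl)
  rw [← Fintype.card_congr e1]
  have hanti : Antitone (fun k : Fin n => (d ∘ ⇑(Tuple.sort d)) k.rev) := by
    intro k l hkl
    exact Tuple.monotone_sort d (Fin.rev_le_rev.mpr hkl)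
  rw [Fintype.card_subtype]
  convert (Tuple.lt_card_ge_iff_apply_ge_of_antitone (a := a) (j := j) hanti).mpr (le_of_eq ha)

/-- at least `n - j` indices have eigenvalue `≤ eigVal M j`. -/
lemma card_bot (d : Fin n → ℝ) (j : Fin n) :
    (j.rev : ℕ) < Fintype.card {i // d i ≤ (d ∘ ⇑(Tuple.sort d)) j.rev} := by
  classical
  set a := (d ∘ ⇑(Tuple.sort d)) j.rev with ha
  have e1 : {k : Fin n // (d ∘ ⇑(Tuple.sort d)) k ≤ a} ≃ {i : Fin n // d i ≤ a} := by
    refine (Equiv.subtypeEquiv (Tuple.sort d) fun k => Iff.rfl)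
  rw [← Fintype.card_congr e1]
  rw [Fintype.card_subtype]
  convert (Tuple.lt_card_le_iff_apply_le_of_monotone (a := a) (j := j.rev) (Tuple.monotone_sort d)).mpr
    (le_of_eq ha)

lemma card_top' (d : Fin n → ℝ) (j : Fin n) {a : ℝ} (ha : a = (d ∘ ⇑(Tuple.sort d)) j.rev) :
    (j : ℕ) < Fintype.card {i : Fin n // a ≤ d i} := by
  subst ha; exact card_top d j

lemma card_bot' (d : Fin n → ℝ) (j : Fin n) {a : ℝ} (ha : a = (d ∘ ⇑(Tuple.sort d)) j.rev) :
    (j.rev : ℕ) < Fintype.card {i : Fin n // d i ≤ a} := by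
  subst ha; exact card_bot d j

lemma exists_good_vector (W : Matrix (Fin n) (Fin n) ℂ) (P Q : Fin n → Prop)
    [DecidablePred P] [DecidablePred Q]
    (hcard : Fintype.card {i // Q i} < Fintype.card {i // P i}) :
    ∃ xf : Fin n → ℂ, xf ≠ 0 ∧ (∀ i, ¬ P i → xf i = 0) ∧ (∀ i, Q i → (W *ᵥ xf) i = 0) := by
  classical
  set L : ({i // P i} → ℂ) →ₗ[ℂ] ({i // Q i} → ℂ) :=
    (W.submatrix (Subtype.val) (Subtype.val)).mulVecLin with hL
  have hnoninj : ¬ Function.Injective L := by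
    intro hinj
    have := LinearMap.finrank_le_finrank_of_injective hinj
    rw [Module.finrank_fintype_fun_eq_card, Module.finrank_fintype_fun_eq_card] at this
    omega
  rw [← LinearMap.ker_eq_bot] at hnoninj
  obtain ⟨x, hxmem, hx0⟩ := Submodule.exists_mem_ne_zero_of_ne_bot hnoninj
  refine ⟨fun i => if h : P i then x ⟨i, h⟩ else 0, ?_, fun i hi => dif_neg hi, ?_⟩
  · intro hcontra
    apply hx0
    funext l
    have := congrFun hcontra l.1
    simpa [dif_pos l.2] using this
  · intro i hi
    have hker := congrFun (LinearMap.mem_ker.mp hxmem) ⟨i, hi⟩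
    have hL2 : L x ⟨i, hi⟩ = ∑ l : {k // P k}, W i l.1 * x l := by
      simp [hL, Matrix.mulVecLin_apply, Matrix.mulVec, dotProduct,
        Matrix.submatrix_apply]
    have key : (∑ k : Fin n, W i k * if h : P k then x ⟨k, h⟩ else 0)
        = ∑ l : {k // P k}, W i l.1 * x l := by
      rw [← Finset.sum_subset (Finset.filter_subset P Finset.univ)
          (fun k _ hk => by
            simp only [Finset.mem_filter, Finset.mem_univ, true_and] at hk
            simp [hk])]
      rw [Finset.sum_subtype (p := P) (Finset.univ.filter P) (fun k => by simp)
        (fun k => W i k * if h : P k then x ⟨k, h⟩ else 0)]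
      refine Finset.sum_congr rfl fun l _ => ?_
      rw [dif_pos l.2]
    show (∑ k : Fin n, W i k * if h : P k then x ⟨k, h⟩ else 0) = 0
    rw [key, ← hL2]
    exact hker

lemma real_smul_matrix (r : ℝ) (M : Matrix (Fin n) (Fin n) ℂ) : r • M = (r : ℂ) • M := by
  ext i j
  simp [Complex.real_smul]

lemma herm_real_smul {M : Matrix (Fin n) (Fin n) ℂ} (r : ℝ) (h : M.IsHermitian) :
    (r • M).IsHermitian := by
  rw [real_smul_matrix, Matrix.IsHermitian, Matrix.conjTranspose_smul, h.eq]
  congr 1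
  rw [Complex.star_def, Complex.conj_ofReal]

end Stmt1Aux

open Matrix in
set_option maxHeartbeats 2000000 in
/-- for positive definite `A, B`, `t ∈ [0,1]` and `0 < p ≤ p'`,
`λ_j(((1-t)Aᵖ + tBᵖ)^{1/p}) ≤ λ_j(((1-t)A^{p'} + tB^{p'})^{1/p'})`. -/
theorem stmt1 {n : ℕ} (A B : Matrix (Fin n) (Fin n) ℂ) (hA : A.PosDef) (hB : B.PosDef)
    (t : ℝ) (ht0 : 0 ≤ t) (ht1 : t ≤ 1)
    (p p' : ℝ) (hp : 0 < p) (hpp' : p ≤ p') (j : Fin n) :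
    eigVal (mpow ((1 - t) • mpow A p + t • mpow B p) (1 / p)) j ≤
      eigVal (mpow ((1 - t) • mpow A p' + t • mpow B p') (1 / p')) j := by
  classical
  have hp' : 0 < p' := lt_of_lt_of_le hp hpp'
  have hp0 : p ≠ 0 := ne_of_gt hp
  have hp'0 : p' ≠ 0 := ne_of_gt hp'
  set s : ℝ := p' / p with hs_def
  have hs1 : 1 ≤ s := (one_le_div hp).mpr hpp'
  have hs0 : 0 ≤ s := le_trans zero_le_one hs1
  have ht1' : 0 ≤ 1 - t := by linarith
  set α := hA.1.eigenvalues with hα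
  set β := hB.1.eigenvalues with hβ
  have hα0 : ∀ i, 0 < α i := fun i => hA.eigenvalues_pos i
  have hβ0 : ∀ i, 0 < β i := fun i => hB.eigenvalues_pos i
  set u1 := hA.1.eigenvectorUnitary with hu1
  set u2 := hB.1.eigenvectorUnitary with hu2
  have hdecA : ∀ r : ℝ, Stmt1Aux.IsDecomp (mpow A r) u1 (fun i => α i ^ r) :=
    fun r => Stmt1Aux.isDecomp_herFun hA.1 (fun x => x ^ r)
  have hdecB : ∀ r : ℝ, Stmt1Aux.IsDecomp (mpow B r) u2 (fun i => β i ^ r) :=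
    fun r => Stmt1Aux.isDecomp_herFun hB.1 (fun x => x ^ r)
  -- quadratic form of the convex combinations
  have quadgen : ∀ (r : ℝ) (v : Fin n → ℂ),
      star v ⬝ᵥ (((1 - t) • mpow A r + t • mpow B r) *ᵥ v)
        = (((1 - t) * (∑ i, α i ^ r * Complex.normSq (((star (u1 : Matrix (Fin n) (Fin n) ℂ)) *ᵥ v) i))
            + t * (∑ i, β i ^ r * Complex.normSq (((star (u2 : Matrix (Fin n) (Fin n) ℂ)) *ᵥ v) i)) : ℝ) : ℂ) := by
    intro r v
    rw [Matrix.add_mulVec, dotProduct_add,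
      Stmt1Aux.real_smul_matrix (1 - t), Stmt1Aux.real_smul_matrix t,
      Matrix.smul_mulVec, Matrix.smul_mulVec,
      dotProduct_smul, dotProduct_smul,
      Stmt1Aux.quad_decomp (hdecA r) v, Stmt1Aux.quad_decomp (hdecB r) v]
    push_cast
    simp only [smul_eq_mul]
    try ring
  -- positive definiteness
  have posgen : ∀ r : ℝ, ((1 - t) • mpow A r + t • mpow B r).PosDef := by
    intro r
    have herm : ((1 - t) • mpow A r + t • mpow B r).IsHermitian :=
      Matrix.IsHermitian.add (Stmt1Aux.herm_real_smul _ (hdecA r).isHermitian)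
        (Stmt1Aux.herm_real_smul _ (hdecB r).isHermitian)
    refine Matrix.PosDef.of_dotProduct_mulVec_pos herm fun v hv => ?_
    rw [quadgen r v, Complex.zero_lt_real]
    obtain ⟨ia, hia⟩ := Function.ne_iff.mp (Stmt1Aux.star_mulVec_ne_zero u1 hv)
    obtain ⟨ib, hib⟩ := Function.ne_iff.mp (Stmt1Aux.star_mulVec_ne_zero u2 hv)
    have hSA : 0 < ∑ i, α i ^ r * Complex.normSq (((star (u1 : Matrix (Fin n) (Fin n) ℂ)) *ᵥ v) i) :=
      Finset.sum_pos' (fun i _ => mul_nonneg (Real.rpow_pos_of_pos (hα0 i) r).le (Complex.normSq_nonneg _))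
        ⟨ia, Finset.mem_univ ia, mul_pos (Real.rpow_pos_of_pos (hα0 ia) r) (Complex.normSq_pos.mpr hia)⟩
    have hSB : 0 < ∑ i, β i ^ r * Complex.normSq (((star (u2 : Matrix (Fin n) (Fin n) ℂ)) *ᵥ v) i) :=
      Finset.sum_pos' (fun i _ => mul_nonneg (Real.rpow_pos_of_pos (hβ0 i) r).le (Complex.normSq_nonneg _))
        ⟨ib, Finset.mem_univ ib, mul_pos (Real.rpow_pos_of_pos (hβ0 ib) r) (Complex.normSq_pos.mpr hib)⟩
    by_cases hteq : t < 1
    · exact add_pos_of_pos_of_nonneg (mul_pos (by linarith) hSA) (mul_nonneg ht0 hSB.le)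
    · have ht1'' : t = 1 := le_antisymm ht1 (not_lt.mp hteq)
      refine add_pos_of_nonneg_of_pos (mul_nonneg ht1' hSA.le) (mul_pos ?_ hSB)
      rw [ht1'']; exact one_pos
  set Cp := (1 - t) • mpow A p + t • mpow B p with hCpdef
  set Dp := (1 - t) • mpow A p' + t • mpow B p' with hDpdef
  have posC : Cp.PosDef := posgen p
  have posD : Dp.PosDef := posgen p'
  have hermC : Cp.IsHermitian := posC.1
  have hermD : Dp.IsHermitian := posD.1
  -- step A : pull the outer power out of eigVal
  have monp : MonotoneOn (fun x : ℝ => x ^ (1/p)) (Set.Ici 0) := fun x hx y _ hxy =>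
    Real.rpow_le_rpow hx hxy (by positivity)
  have monp' : MonotoneOn (fun x : ℝ => x ^ (1/p')) (Set.Ici 0) := fun x hx y _ hxy =>
    Real.rpow_le_rpow hx hxy (by positivity)
  have eA : eigVal (mpow Cp (1/p)) j = (eigVal Cp j) ^ (1/p) :=
    Stmt1Aux.eigVal_herFun hermC monp (fun i => (posC.eigenvalues_pos i).le) j
  have eB : eigVal (mpow Dp (1/p')) j = (eigVal Dp j) ^ (1/p') :=
    Stmt1Aux.eigVal_herFun hermD monp' (fun i => (posD.eigenvalues_pos i).le) j
  rw [eA, eB]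
  have hCj : 0 < eigVal Cp j := Stmt1Aux.eigVal_pos posC j
  have hDj : 0 < eigVal Dp j := Stmt1Aux.eigVal_pos posD j
  -- reduce to the core inequality
  suffices core : (eigVal Cp j) ^ s ≤ eigVal Dp j by
    have h1 : (eigVal Cp j) ^ (1/p) = ((eigVal Cp j) ^ s) ^ (1/p') := by
      rw [← Real.rpow_mul hCj.le, hs_def]
      congr 1
      field_simp
    rw [h1]
    exact Real.rpow_le_rpow (Real.rpow_nonneg hCj.le _) core (by positivity)
  -- core inequality
  set c := hermC.eigenvalues with hc
  set dd := hermD.eigenvalues with hdd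
  set u3 := hermC.eigenvectorUnitary with hu3
  set u4 := hermD.eigenvectorUnitary with hu4
  set lamC := eigVal Cp j with hlamC
  set lamD := eigVal Dp j with hlamD
  have hlamCeq : lamC = (c ∘ ⇑(Tuple.sort c)) j.rev := by
    rw [hlamC, eigVal, dif_pos hermC]
  have hlamDeq : lamD = (dd ∘ ⇑(Tuple.sort dd)) j.rev := by
    rw [hlamD, eigVal, dif_pos hermD]
  have hcard1 : (j : ℕ) < Fintype.card {i : Fin n // lamC ≤ c i} :=
    Stmt1Aux.card_top' c j hlamCeq
  have hcard2 : ((j.rev : Fin n) : ℕ) < Fintype.card {i : Fin n // dd i ≤ lamD} :=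
    Stmt1Aux.card_bot' dd j hlamDeq
  have hcardT : Fintype.card {i : Fin n // ¬ (dd i ≤ lamD)} < Fintype.card {i : Fin n // lamC ≤ c i} := by
    have h1 := Fintype.card_subtype_compl (fun i : Fin n => dd i ≤ lamD)
    have h2 : Fintype.card {i : Fin n // dd i ≤ lamD} ≤ n :=
      (Fintype.card_subtype_le _).trans_eq (Fintype.card_fin n)
    have hjr : ((j.rev : Fin n) : ℕ) = n - ((j : ℕ) + 1) := Fin.val_rev j
    have hjn : (j : ℕ) < n := j.isLt
    rw [h1, Fintype.card_fin]
    omega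
  obtain ⟨xf, hxf0, hsupp, hker⟩ := Stmt1Aux.exists_good_vector
    ((star (u4 : Matrix (Fin n) (Fin n) ℂ)) * (u3 : Matrix (Fin n) (Fin n) ℂ))
    (fun i => lamC ≤ c i) (fun i => ¬ (dd i ≤ lamD)) hcardT
  set v := (u3 : Matrix (Fin n) (Fin n) ℂ) *ᵥ xf with hv
  have hvx : (star (u3 : Matrix (Fin n) (Fin n) ℂ)) *ᵥ v = xf := by
    rw [hv, Matrix.mulVec_mulVec, Stmt1Aux.star_self_mul, Matrix.one_mulVec]
  have hvne : v ≠ 0 := by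
    intro h0
    apply hxf0
    rw [← hvx, h0, Matrix.mulVec_zero]
  set N := ∑ i, Complex.normSq (v i) with hN
  have hNpos : 0 < N := by
    obtain ⟨i, hi⟩ := Function.ne_iff.mp hvne
    exact Finset.sum_pos' (fun i _ => Complex.normSq_nonneg _)
      ⟨i, Finset.mem_univ i, Complex.normSq_pos.mpr hi⟩
  have hsumqc : ∑ i, Complex.normSq (xf i) = N := by
    have h := Stmt1Aux.sum_normSq_unitary u3 v
    rw [hvx] at h
    exact h
  have hsumqd : ∑ i, Complex.normSq (((star (u4 : Matrix (Fin n) (Fin n) ℂ)) *ᵥ v) i) = N :=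
    Stmt1Aux.sum_normSq_unitary u4 v
  have hsumqa : ∑ i, Complex.normSq (((star (u1 : Matrix (Fin n) (Fin n) ℂ)) *ᵥ v) i) = N :=
    Stmt1Aux.sum_normSq_unitary u1 v
  have hsumqb : ∑ i, Complex.normSq (((star (u2 : Matrix (Fin n) (Fin n) ℂ)) *ᵥ v) i) = N :=
    Stmt1Aux.sum_normSq_unitary u2 v
  -- the two expressions for the quadratic forms
  have hCq : ∑ i, c i * Complex.normSq (xf i)
      = (1 - t) * (∑ i, α i ^ p * Complex.normSq (((star (u1 : Matrix (Fin n) (Fin n) ℂ)) *ᵥ v) i))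
        + t * (∑ i, β i ^ p * Complex.normSq (((star (u2 : Matrix (Fin n) (Fin n) ℂ)) *ᵥ v) i)) := by
    apply Complex.ofReal_injective
    have h1 := Stmt1Aux.quad_decomp (Stmt1Aux.isDecomp_spectral hermC) v
    rw [hvx] at h1
    exact h1.symm.trans (quadgen p v)
  have hDq : ∑ i, dd i * Complex.normSq (((star (u4 : Matrix (Fin n) (Fin n) ℂ)) *ᵥ v) i)
      = (1 - t) * (∑ i, α i ^ p' * Complex.normSq (((star (u1 : Matrix (Fin n) (Fin n) ℂ)) *ᵥ v) i))
        + t * (∑ i, β i ^ p' * Complex.normSq (((star (u2 : Matrix (Fin n) (Fin n) ℂ)) *ᵥ v) i)) := by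
    apply Complex.ofReal_injective
    have h1 := Stmt1Aux.quad_decomp (Stmt1Aux.isDecomp_spectral hermD) v
    exact h1.symm.trans (quadgen p' v)
  -- eigenvalue bounds from the support properties
  have hbound1 : lamC * N ≤ ∑ i, c i * Complex.normSq (xf i) := by
    rw [← hsumqc, Finset.mul_sum]
    refine Finset.sum_le_sum fun i _ => ?_
    by_cases hi : lamC ≤ c i
    · exact mul_le_mul_of_nonneg_right hi (Complex.normSq_nonneg _)
    · rw [hsupp i hi]
      simp
  have hbound2 : ∑ i, dd i * Complex.normSq (((star (u4 : Matrix (Fin n) (Fin n) ℂ)) *ᵥ v) i)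
      ≤ lamD * N := by
    rw [← hsumqd, Finset.mul_sum]
    refine Finset.sum_le_sum fun i _ => ?_
    by_cases hi : dd i ≤ lamD
    · exact mul_le_mul_of_nonneg_right hi (Complex.normSq_nonneg _)
    · have h0 : ((star (u4 : Matrix (Fin n) (Fin n) ℂ)) *ᵥ v) i = 0 := by
        rw [hv, Matrix.mulVec_mulVec]
        exact hker i hi
      rw [h0]
      simp
  -- Jensen inequality for each of the two matrices
  have jensen : ∀ (e q : Fin n → ℝ), (∀ i, 0 < e i) → (∀ i, 0 ≤ q i) → (∑ i, q i = N) →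
      ((∑ i, e i ^ p * q i) / N) ^ s ≤ (∑ i, e i ^ p' * q i) / N := by
    intro e q he hq hsum
    have h1 : (∑ i, (q i / N) * (e i ^ p)) ^ s ≤ ∑ i, (q i / N) * (e i ^ p) ^ s :=
      Real.rpow_arith_mean_le_arith_mean_rpow Finset.univ _ _
        (fun i _ => div_nonneg (hq i) hNpos.le)
        (by rw [← Finset.sum_div, hsum, div_self hNpos.ne'])
        (fun i _ => (Real.rpow_pos_of_pos (he i) p).le) hs1
    have h2 : ∀ i, (e i ^ p) ^ s = e i ^ p' := by
      intro i
      rw [← Real.rpow_mul (he i).le]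
      congr 1
      rw [hs_def]
      field_simp
    calc ((∑ i, e i ^ p * q i) / N) ^ s
        = (∑ i, (q i / N) * (e i ^ p)) ^ s := by
          rw [Finset.sum_div]
          congr 1
          refine Finset.sum_congr rfl fun i _ => by ring
      _ ≤ ∑ i, (q i / N) * (e i ^ p) ^ s := h1
      _ = (∑ i, e i ^ p' * q i) / N := by
          rw [Finset.sum_div]
          refine Finset.sum_congr rfl fun i _ => ?_
          rw [h2 i]
          ring
  have jA := jensen α (fun i => Complex.normSq (((star (u1 : Matrix (Fin n) (Fin n) ℂ)) *ᵥ v) i))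
    hα0 (fun i => Complex.normSq_nonneg _) hsumqa
  have jB := jensen β (fun i => Complex.normSq (((star (u2 : Matrix (Fin n) (Fin n) ℂ)) *ᵥ v) i))
    hβ0 (fun i => Complex.normSq_nonneg _) hsumqb
  set X := (∑ i, α i ^ p * Complex.normSq (((star (u1 : Matrix (Fin n) (Fin n) ℂ)) *ᵥ v) i)) / N with hX
  set Y := (∑ i, β i ^ p * Complex.normSq (((star (u2 : Matrix (Fin n) (Fin n) ℂ)) *ᵥ v) i)) / N with hY
  have hX0 : 0 ≤ X := div_nonneg (Finset.sum_nonneg fun i _ =>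
    mul_nonneg (Real.rpow_pos_of_pos (hα0 i) p).le (Complex.normSq_nonneg _)) hNpos.le
  have hY0 : 0 ≤ Y := div_nonneg (Finset.sum_nonneg fun i _ =>
    mul_nonneg (Real.rpow_pos_of_pos (hβ0 i) p).le (Complex.normSq_nonneg _)) hNpos.le
  have twopoint : ((1 - t) * X + t * Y) ^ s ≤ (1 - t) * X ^ s + t * Y ^ s := by
    have h := (convexOn_rpow hs1).2 (Set.mem_Ici.mpr hX0) (Set.mem_Ici.mpr hY0) ht1' ht0 (by ring)
    simpa [smul_eq_mul] using h
  have hchain1 : lamC ≤ (1 - t) * X + t * Y := by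
    have h1 : lamC ≤ (∑ i, c i * Complex.normSq (xf i)) / N := (le_div_iff₀ hNpos).mpr hbound1
    rw [hCq] at h1
    calc lamC ≤ _ := h1
      _ = (1 - t) * X + t * Y := by rw [hX, hY]; ring
  have hchain2 : (1 - t) * X ^ s + t * Y ^ s ≤ lamD := by
    have h3 : (∑ i, dd i * Complex.normSq (((star (u4 : Matrix (Fin n) (Fin n) ℂ)) *ᵥ v) i)) / N ≤ lamD :=
      (div_le_iff₀ hNpos).mpr hbound2
    rw [hDq] at h3
    calc (1 - t) * X ^ s + t * Y ^ s
        ≤ (1 - t) * ((∑ i, α i ^ p' * Complex.normSq (((star (u1 : Matrix (Fin n) (Fin n) ℂ)) *ᵥ v) i)) / N)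
          + t * ((∑ i, β i ^ p' * Complex.normSq (((star (u2 : Matrix (Fin n) (Fin n) ℂ)) *ᵥ v) i)) / N) :=
          add_le_add (mul_le_mul_of_nonneg_left jA ht1') (mul_le_mul_of_nonneg_left jB ht0)
      _ = ((1 - t) * (∑ i, α i ^ p' * Complex.normSq (((star (u1 : Matrix (Fin n) (Fin n) ℂ)) *ᵥ v) i))
          + t * (∑ i, β i ^ p' * Complex.normSq (((star (u2 : Matrix (Fin n) (Fin n) ℂ)) *ᵥ v) i))) / N := by
          ring
      _ ≤ lamD := h3
  calc lamC ^ s ≤ ((1 - t) * X + t * Y) ^ s := Real.rpow_le_rpow hCj.le hchain1 hs0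
    _ ≤ (1 - t) * X ^ s + t * Y ^ s := twopoint
    _ ≤ lamD := hchain2
end

section
/- Let A and B be n×n complex positive definite matrices, t ∈ [0,1], and let p ≤ p' < 0. Then for each j ∈ {1,…,n}, λ_j(((1-t)A^p + tB^p)^{1/p}) ≤ λ_j(((1-t)A^{p'} + tB^{p'})^{1/p'}). -/
open scoped BigOperators ComplexOrder
set_option maxHeartbeats 2000000

namespace Stmt2Aux

open Matrix Finset

local notation "⟪" x ", " y "⟫" => @inner ℂ _ _ x y

variable {n : ℕ}

/-! ### Sorted tuples -/

/-- increasingly sorted rearrangement of a tuple -/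
noncomputable def sInc (v : Fin n → ℝ) : Fin n → ℝ := v ∘ Tuple.sort v

lemma monotone_sInc (v : Fin n → ℝ) : Monotone (sInc v) := Tuple.monotone_sort v

lemma sortedEq {u w : Fin n → ℝ} (h : (List.ofFn u).Perm (List.ofFn w)) (hw : Monotone w) :
    sInc u = w := by
  have h1 : (List.ofFn (sInc u)).Perm (List.ofFn u) :=
    Equiv.Perm.ofFn_comp_perm (Tuple.sort u) u
  have hs1 : (List.ofFn (sInc u)).SortedLE :=
    List.sortedLE_ofFn_iff.2 (monotone_sInc u)
  have hs2 : (List.ofFn w).SortedLE := List.sortedLE_ofFn_iff.2 hw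
  exact List.ofFn_injective (List.Perm.eq_of_sortedLE hs1 hs2 (h1.trans h))

lemma sInc_comp_monotone {f : ℝ → ℝ} (hf : Monotone f) (v : Fin n → ℝ) :
    sInc (f ∘ v) = f ∘ sInc v := by
  apply sortedEq
  · exact (Equiv.Perm.ofFn_comp_perm (Tuple.sort v) (f ∘ v)).symm
  · exact hf.comp (monotone_sInc v)

lemma sInc_pos {v : Fin n → ℝ} (hv : ∀ i, 0 < v i) (k : Fin n) : 0 < sInc v k := hv _

lemma sInc_comp_antitone {f : ℝ → ℝ} {v : Fin n → ℝ} (hv : ∀ i, 0 < v i)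
    (hf : ∀ ⦃x y : ℝ⦄, 0 < x → x ≤ y → f y ≤ f x) (k : Fin n) :
    sInc (f ∘ v) k = f (sInc v k.rev) := by
  have hm : Monotone (fun i : Fin n => f (sInc v i.rev)) := by
    intro i j hij
    exact hf (sInc_pos hv _) (monotone_sInc v (by rwa [Fin.rev_le_rev]))
  have heq : sInc (f ∘ v) = fun i : Fin n => f (sInc v i.rev) := by
    apply sortedEq _ hm
    have h2 : (fun i : Fin n => f (sInc v i.rev)) =
        (f ∘ v) ∘ ⇑(Fin.revPerm.trans (Tuple.sort v)) := rfl
    rw [h2]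
    exact (Equiv.Perm.ofFn_comp_perm (Fin.revPerm.trans (Tuple.sort v)) (f ∘ v)).symm
  rw [heq]

/-! ### Columns of a unitary matrix -/

/-- the `i`-th column of a matrix, as an element of Euclidean space -/
noncomputable def colE (V : Matrix (Fin n) (Fin n) ℂ) (i : Fin n) :
    EuclideanSpace ℂ (Fin n) :=
  (WithLp.equiv 2 (Fin n → ℂ)).symm (fun k => V k i)

lemma orthonormal_colE (V : Matrix.unitaryGroup (Fin n) ℂ) :
    Orthonormal ℂ (colE (V : Matrix (Fin n) (Fin n) ℂ)) := by
  rw [orthonormal_iff_ite]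
  intro i j
  rw [colE, colE, WithLp.equiv_symm_apply, EuclideanSpace.inner_toLp_toLp, dotProduct_comm]
  have h1 : dotProduct (star fun k => (V : Matrix (Fin n) (Fin n) ℂ) k i)
      (fun k => (V : Matrix (Fin n) (Fin n) ℂ) k j)
      = (star (V : Matrix (Fin n) (Fin n) ℂ) * (V : Matrix (Fin n) (Fin n) ℂ)) i j := by
    simp [Matrix.mul_apply, dotProduct, Matrix.star_apply, Matrix.conjTranspose_apply,
      Matrix.star_eq_conjTranspose]
  rw [h1, Unitary.star_mul_self_of_mem V.2, Matrix.one_apply]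

lemma colE_eq_mulVec (V : Matrix (Fin n) (Fin n) ℂ) (j : Fin n) :
    (fun k => V k j) = V *ᵥ Pi.single j 1 := by
  funext k; simp [Matrix.mulVec_single]

lemma toEuclideanLin_colE (V : Matrix.unitaryGroup (Fin n) ℂ) (d : Fin n → ℝ) (j : Fin n) :
    Matrix.toEuclideanLin
      ((V : Matrix (Fin n) (Fin n) ℂ) * Matrix.diagonal (fun i => (d i : ℂ)) *
        star (V : Matrix (Fin n) (Fin n) ℂ)) (colE V j) = (d j : ℂ) • colE V j := by
  rw [colE, WithLp.equiv_symm_apply, toEuclideanLin_apply_piLp_toLp]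
  rw [colE_eq_mulVec]
  rw [Matrix.mulVec_mulVec]
  have h1 : (V : Matrix (Fin n) (Fin n) ℂ) * Matrix.diagonal (fun i => (d i : ℂ)) *
      star (V : Matrix (Fin n) (Fin n) ℂ) * (V : Matrix (Fin n) (Fin n) ℂ)
      = (V : Matrix (Fin n) (Fin n) ℂ) * Matrix.diagonal (fun i => (d i : ℂ)) := by
    rw [Matrix.mul_assoc, Unitary.star_mul_self_of_mem V.2, Matrix.mul_one]
  rw [h1, ← Matrix.mulVec_mulVec, Matrix.diagonal_mulVec_single]
  have h2 : (Pi.single j ((d j : ℂ) * 1) : Fin n → ℂ)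
      = (d j : ℂ) • (Pi.single j 1 : Fin n → ℂ) := by
    rw [← smul_eq_mul, Pi.single_smul]
  rw [h2, Matrix.mulVec_smul, WithLp.toLp_smul, ← colE_eq_mulVec]

/-! ### Quadratic form estimates on spans of eigenvector columns -/

open RCLike in
lemma quad_repr (V : Matrix.unitaryGroup (Fin n) ℂ) (d : Fin n → ℝ) (S : Finset (Fin n))
    {x : EuclideanSpace ℂ (Fin n)}
    (hx : x ∈ Submodule.span ℂ (Set.range (fun i : S => colE (V : Matrix (Fin n) (Fin n) ℂ) i))) :
    ∃ c : S → ℝ, (∀ i, 0 ≤ c i) ∧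
      re (⟪x, x⟫) = ∑ i, c i ∧
      re (⟪x, Matrix.toEuclideanLin
        ((V : Matrix (Fin n) (Fin n) ℂ) * Matrix.diagonal (fun i => (d i : ℂ)) *
          star (V : Matrix (Fin n) (Fin n) ℂ)) x⟫) = ∑ i : S, d i * c i := by
  rw [Submodule.mem_span_range_iff_exists_fun] at hx
  obtain ⟨c, rfl⟩ := hx
  have hon : Orthonormal ℂ (fun i : S => colE (V : Matrix (Fin n) (Fin n) ℂ) i) :=
    (orthonormal_colE V).comp _ Subtype.val_injective
  refine ⟨fun i => Complex.normSq (c i), fun i => Complex.normSq_nonneg _, ?_, ?_⟩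
  · rw [hon.inner_sum c c]
    rw [map_sum]
    congr 1; funext i
    simp [Complex.normSq_apply]
  · have happ : Matrix.toEuclideanLin
        ((V : Matrix (Fin n) (Fin n) ℂ) * Matrix.diagonal (fun i => (d i : ℂ)) *
          star (V : Matrix (Fin n) (Fin n) ℂ)) (∑ i : S, c i • colE (V : Matrix (Fin n) (Fin n) ℂ) i)
        = ∑ i : S, (c i * (d i : ℂ)) • colE (V : Matrix (Fin n) (Fin n) ℂ) i := by
      rw [map_sum]
      congr 1; funext i
      rw [LinearMap.map_smul, toEuclideanLin_colE, smul_smul, mul_comm]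
    rw [happ, hon.inner_sum c (fun i => c i * (d i : ℂ)), map_sum]
    congr 1; funext i
    have : (starRingEnd ℂ) (c i) * (c i * (d i : ℂ)) = (d i : ℂ) * ((starRingEnd ℂ) (c i) * c i) := by
      ring
    rw [this, ← Complex.normSq_eq_conj_mul_self]
    simp [Complex.ofReal_mul]

/-! ### Weyl monotonicity -/

open RCLike in
lemma weyl_core {X Y : Matrix (Fin n) (Fin n) ℂ} {V W : Matrix.unitaryGroup (Fin n) ℂ}
    {d e : Fin n → ℝ}
    (hX : X = (V : Matrix (Fin n) (Fin n) ℂ) * Matrix.diagonal (fun i => (d i : ℂ)) *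
      star (V : Matrix (Fin n) (Fin n) ℂ))
    (hY : Y = (W : Matrix (Fin n) (Fin n) ℂ) * Matrix.diagonal (fun i => (e i : ℂ)) *
      star (W : Matrix (Fin n) (Fin n) ℂ))
    (hP : (Y - X).PosSemidef) (k : Fin n) : sInc d k ≤ sInc e k := by
  classical
  set S1 : Finset (Fin n) := (Finset.Ici k).image (Tuple.sort d) with hS1
  set S2 : Finset (Fin n) := (Finset.Iic k).image (Tuple.sort e) with hS2
  set V1 : Submodule ℂ (EuclideanSpace ℂ (Fin n)) :=
    Submodule.span ℂ (Set.range (fun i : S1 => colE (V : Matrix (Fin n) (Fin n) ℂ) i)) with hV1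
  set V2 : Submodule ℂ (EuclideanSpace ℂ (Fin n)) :=
    Submodule.span ℂ (Set.range (fun i : S2 => colE (W : Matrix (Fin n) (Fin n) ℂ) i)) with hV2
  have hli1 : LinearIndependent ℂ (fun i : S1 => colE (V : Matrix (Fin n) (Fin n) ℂ) i) :=
    ((orthonormal_colE V).comp _ Subtype.val_injective).linearIndependent
  have hli2 : LinearIndependent ℂ (fun i : S2 => colE (W : Matrix (Fin n) (Fin n) ℂ) i) :=
    ((orthonormal_colE W).comp _ Subtype.val_injective).linearIndependent
  have hr1 : Module.finrank ℂ V1 = S1.card := by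
    rw [hV1]
    exact (finrank_span_eq_card hli1).trans (Fintype.card_coe _)
  have hr2 : Module.finrank ℂ V2 = S2.card := by
    rw [hV2]
    exact (finrank_span_eq_card hli2).trans (Fintype.card_coe _)
  have hc1 : S1.card = n - k := by
    rw [hS1, Finset.card_image_of_injective _ (Tuple.sort d).injective, Fin.card_Ici]
  have hc2 : S2.card = k + 1 := by
    rw [hS2, Finset.card_image_of_injective _ (Tuple.sort e).injective, Fin.card_Iic]
  -- the intersection is nontrivial
  have hdim : 0 < Module.finrank ℂ ↥(V1 ⊓ V2) := by
    have hsum := Submodule.finrank_sup_add_finrank_inf_eq V1 V2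
    have hle : Module.finrank ℂ ↥(V1 ⊔ V2) ≤ n := by
      have := Submodule.finrank_le (V1 ⊔ V2)
      simpa [finrank_euclideanSpace_fin] using this
    have hk : (k : ℕ) < n := k.2
    omega
  have : Nontrivial ↥(V1 ⊓ V2) := Module.nontrivial_of_finrank_pos hdim
  obtain ⟨v, hv⟩ := exists_ne (0 : ↥(V1 ⊓ V2))
  have hx0 : (v : EuclideanSpace ℂ (Fin n)) ≠ 0 := by
    simpa [Submodule.coe_eq_zero] using hv
  obtain ⟨hm1, hm2⟩ := Submodule.mem_inf.mp v.2
  obtain ⟨c1, hc1nn, hn1, hq1⟩ := quad_repr V d S1 hm1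
  obtain ⟨c2, hc2nn, hn2, hq2⟩ := quad_repr W e S2 hm2
  set x : EuclideanSpace ℂ (Fin n) := (v : EuclideanSpace ℂ (Fin n))
  have hxx : 0 < re (⟪x, x⟫) := by
    rw [inner_self_eq_norm_sq]
    exact pow_pos (norm_pos_iff.mpr hx0) 2
  -- lower bound for X
  have hlow : sInc d k * re (⟪x, x⟫) ≤
      re (⟪x, Matrix.toEuclideanLin X x⟫) := by
    rw [hX, hq1, hn1, Finset.mul_sum]
    apply Finset.sum_le_sum
    rintro ⟨i, hi⟩ _
    rw [hS1] at hi
    obtain ⟨l, hl, rfl⟩ := Finset.mem_image.mp hi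
    have : sInc d k ≤ d (Tuple.sort d l) :=
      monotone_sInc d (Finset.mem_Ici.mp hl)
    exact mul_le_mul_of_nonneg_right this (hc1nn _)
  have hhigh : re (⟪x, Matrix.toEuclideanLin Y x⟫) ≤
      sInc e k * re (⟪x, x⟫) := by
    rw [hY, hq2, hn2, Finset.mul_sum]
    apply Finset.sum_le_sum
    rintro ⟨i, hi⟩ _
    rw [hS2] at hi
    obtain ⟨l, hl, rfl⟩ := Finset.mem_image.mp hi
    have : e (Tuple.sort e l) ≤ sInc e k :=
      monotone_sInc e (Finset.mem_Iic.mp hl)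
    exact mul_le_mul_of_nonneg_right this (hc2nn _)
  -- PSD middle step
  have hmid : re (⟪x, Matrix.toEuclideanLin X x⟫) ≤
      re (⟪x, Matrix.toEuclideanLin Y x⟫) := by
    have h0 : 0 ≤ re (dotProduct (star (WithLp.equiv 2 (Fin n → ℂ) x))
        ((Y - X) *ᵥ (WithLp.equiv 2 (Fin n → ℂ) x))) := hP.re_dotProduct_nonneg _
    have heq : ⟪x, Matrix.toEuclideanLin (Y - X) x⟫
        = dotProduct (star (WithLp.equiv 2 (Fin n → ℂ) x))
          ((Y - X) *ᵥ (WithLp.equiv 2 (Fin n → ℂ) x)) := by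
      rw [EuclideanSpace.inner_eq_star_dotProduct, dotProduct_comm]
      rfl
    rw [map_sub] at heq
    simp only [LinearMap.sub_apply] at heq
    rw [inner_sub_right] at heq
    have := h0
    rw [← heq] at this
    rw [map_sub] at this
    linarith
  have := le_trans hlow (le_trans hmid hhigh)
  exact le_of_mul_le_mul_right (by linarith [this]) hxx

lemma sInc_eq_of_decomp {X : Matrix (Fin n) (Fin n) ℂ} {V W : Matrix.unitaryGroup (Fin n) ℂ}
    {d e : Fin n → ℝ}
    (hX : X = (V : Matrix (Fin n) (Fin n) ℂ) * Matrix.diagonal (fun i => (d i : ℂ)) *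
      star (V : Matrix (Fin n) (Fin n) ℂ))
    (hX' : X = (W : Matrix (Fin n) (Fin n) ℂ) * Matrix.diagonal (fun i => (e i : ℂ)) *
      star (W : Matrix (Fin n) (Fin n) ℂ)) : sInc d = sInc e := by
  have h0 : (X - X).PosSemidef := by simpa using Matrix.PosSemidef.zero (n := Fin n) (R := ℂ)
  exact funext fun k => le_antisymm (weyl_core hX hX' h0 k) (weyl_core hX' hX h0 k)

/-! ### Hermitian / PSD / PD facts for unitary conjugates of real diagonals -/

lemma isHermitian_conj_diag (V : Matrix.unitaryGroup (Fin n) ℂ) (d : Fin n → ℝ) :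
    ((V : Matrix (Fin n) (Fin n) ℂ) * Matrix.diagonal (fun i => (d i : ℂ)) *
      star (V : Matrix (Fin n) (Fin n) ℂ)).IsHermitian := by
  rw [Matrix.star_eq_conjTranspose]
  refine Matrix.isHermitian_mul_mul_conjTranspose _ ?_
  refine Matrix.isHermitian_diagonal_of_self_adjoint _ ?_
  funext i
  simp [Pi.star_apply, Complex.conj_ofReal]

lemma posSemidef_conj_diag (V : Matrix.unitaryGroup (Fin n) ℂ) {d : Fin n → ℝ}
    (hd : ∀ i, 0 ≤ d i) :
    ((V : Matrix (Fin n) (Fin n) ℂ) * Matrix.diagonal (fun i => (d i : ℂ)) *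
      star (V : Matrix (Fin n) (Fin n) ℂ)).PosSemidef := by
  rw [Matrix.star_eq_conjTranspose]
  refine Matrix.PosSemidef.mul_mul_conjTranspose_same ?_ _
  refine Matrix.PosSemidef.diagonal (fun i => ?_)
  simpa using (Complex.zero_le_real).mpr (hd i)

lemma posDef_conj_diag (V : Matrix.unitaryGroup (Fin n) ℂ) {d : Fin n → ℝ}
    (hd : ∀ i, 0 < d i) :
    ((V : Matrix (Fin n) (Fin n) ℂ) * Matrix.diagonal (fun i => (d i : ℂ)) *
      star (V : Matrix (Fin n) (Fin n) ℂ)).PosDef := by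
  refine Matrix.PosDef.of_dotProduct_mulVec_pos (isHermitian_conj_diag V d) (fun x hx => ?_)
  have hdd : (Matrix.diagonal (fun i => (d i : ℂ))).PosDef := by
    refine Matrix.PosDef.diagonal ?_
    intro i
    exact_mod_cast (Complex.zero_lt_real).mpr (hd i)
  set y : Fin n → ℂ := star (V : Matrix (Fin n) (Fin n) ℂ) *ᵥ x with hy
  have hxy : (V : Matrix (Fin n) (Fin n) ℂ) *ᵥ y = x := by
    rw [hy, Matrix.mulVec_mulVec, Matrix.mem_unitaryGroup_iff.mp V.2, Matrix.one_mulVec]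
  have hy0 : y ≠ 0 := by
    intro h
    rw [h, Matrix.mulVec_zero] at hxy
    exact hx hxy.symm
  have h5 : ((V : Matrix (Fin n) (Fin n) ℂ) * Matrix.diagonal (fun i => (d i : ℂ)) *
      star (V : Matrix (Fin n) (Fin n) ℂ)) *ᵥ x
      = (V : Matrix (Fin n) (Fin n) ℂ) *ᵥ (Matrix.diagonal (fun i => (d i : ℂ)) *ᵥ y) := by
    rw [hy, Matrix.mulVec_mulVec, Matrix.mulVec_mulVec, Matrix.mul_assoc]
  have h6 : star y = star x ᵥ* (V : Matrix (Fin n) (Fin n) ℂ) := by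
    rw [hy, Matrix.star_mulVec, Matrix.star_eq_conjTranspose,
      Matrix.conjTranspose_conjTranspose]
  have key : dotProduct (star x)
      (((V : Matrix (Fin n) (Fin n) ℂ) * Matrix.diagonal (fun i => (d i : ℂ)) *
        star (V : Matrix (Fin n) (Fin n) ℂ)) *ᵥ x)
      = dotProduct (star y) (Matrix.diagonal (fun i => (d i : ℂ)) *ᵥ y) := by
    rw [h5, Matrix.dotProduct_mulVec (star x), h6]
  rw [key]
  exact hdd.dotProduct_mulVec_pos hy0

/-! ### real smul facts -/

lemma real_smul_eq (r : ℝ) (M : Matrix (Fin n) (Fin n) ℂ) : r • M = (r : ℂ) • M := by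
  ext i j
  simp [Complex.real_smul]

lemma real_smul_posSemidef {r : ℝ} (hr : 0 ≤ r) {M : Matrix (Fin n) (Fin n) ℂ}
    (hM : M.PosSemidef) : (r • M).PosSemidef := by
  refine Matrix.PosSemidef.of_dotProduct_mulVec_nonneg ?_ ?_
  · rw [Matrix.IsHermitian, Matrix.conjTranspose_smul, star_trivial, hM.1.eq]
  · intro x
    rw [real_smul_eq, Matrix.smul_mulVec, dotProduct_smul, smul_eq_mul]
    have h := hM.dotProduct_mulVec_nonneg x
    rw [Complex.le_def] at h ⊢
    constructor
    · simp only [Complex.zero_re, Complex.mul_re, Complex.ofReal_re, Complex.ofReal_im,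
        Complex.zero_im] at h ⊢
      nlinarith [h.1, h.2]
    · simp only [Complex.zero_im, Complex.mul_im, Complex.ofReal_re, Complex.ofReal_im] at h ⊢
      nlinarith [h.2]

lemma real_smul_posDef {r : ℝ} (hr : 0 < r) {M : Matrix (Fin n) (Fin n) ℂ}
    (hM : M.PosDef) : (r • M).PosDef := by
  refine Matrix.PosDef.of_dotProduct_mulVec_pos ?_ ?_
  · rw [Matrix.IsHermitian, Matrix.conjTranspose_smul, star_trivial, hM.1.eq]
  · intro x hx
    rw [real_smul_eq, Matrix.smul_mulVec, dotProduct_smul, smul_eq_mul]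
    have h := hM.dotProduct_mulVec_pos hx
    rw [Complex.lt_def] at h ⊢
    constructor
    · simp only [Complex.zero_re, Complex.mul_re, Complex.ofReal_re, Complex.ofReal_im,
        Complex.zero_im] at h ⊢
      nlinarith [h.1, h.2]
    · simp only [Complex.zero_im, Complex.mul_im, Complex.ofReal_re, Complex.ofReal_im] at h ⊢
      nlinarith [h.2]

/-! ### scalar tangent line inequality -/

lemma scalar_tangent {y μ s : ℝ} (hy : 0 < y) (hμ : 0 < μ) (hs : 1 ≤ s) :
    (1 - s) * μ ^ s + s * μ ^ (s - 1) * y ≤ y ^ s := by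
  have h1 : (-1 : ℝ) ≤ y / μ - 1 := by
    have : 0 ≤ y / μ := le_of_lt (div_pos hy hμ)
    linarith
  have h2 := one_add_mul_self_le_rpow_one_add h1 hs
  rw [show (1 : ℝ) + (y / μ - 1) = y / μ by ring] at h2
  rw [Real.div_rpow hy.le hμ.le] at h2
  have hμs : (0 : ℝ) < μ ^ s := Real.rpow_pos_of_pos hμ _
  have h3 : (1 + s * (y / μ - 1)) * μ ^ s ≤ y ^ s := by
    rw [← le_div_iff₀ hμs]
    exact h2
  have h4 : μ ^ (s - 1) = μ ^ s / μ := by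
    rw [Real.rpow_sub hμ, Real.rpow_one]
  calc (1 - s) * μ ^ s + s * μ ^ (s - 1) * y
      = (1 + s * (y / μ - 1)) * μ ^ s := by
        rw [h4]; field_simp; ring
    _ ≤ y ^ s := h3


lemma herFun_decomp {Z : Matrix (Fin n) (Fin n) ℂ} (f : ℝ → ℝ) (hZ : Z.IsHermitian) :
    herFun f Z = (hZ.eigenvectorUnitary : Matrix (Fin n) (Fin n) ℂ) *
      Matrix.diagonal (fun i => (f (hZ.eigenvalues i) : ℂ)) *
      star (hZ.eigenvectorUnitary : Matrix (Fin n) (Fin n) ℂ) := by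
  rw [herFun, dif_pos hZ]

lemma spectral_decomp {Z : Matrix (Fin n) (Fin n) ℂ} (hZ : Z.IsHermitian) :
    Z = (hZ.eigenvectorUnitary : Matrix (Fin n) (Fin n) ℂ) *
      Matrix.diagonal (fun i => ((hZ.eigenvalues i : ℝ) : ℂ)) *
      star (hZ.eigenvectorUnitary : Matrix (Fin n) (Fin n) ℂ) :=
  hZ.spectral_theorem

lemma herFun_isHermitian {Z : Matrix (Fin n) (Fin n) ℂ} (f : ℝ → ℝ) (hZ : Z.IsHermitian) :
    (herFun f Z).IsHermitian := by
  rw [herFun_decomp f hZ]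
  exact isHermitian_conj_diag _ _

lemma eigVal_herFun_anti {C : Matrix (Fin n) (Fin n) ℂ} (hC : C.PosDef) {f : ℝ → ℝ}
    (hf : ∀ ⦃x y : ℝ⦄, 0 < x → x ≤ y → f y ≤ f x) (j : Fin n) :
    eigVal (herFun f C) j = f (sInc hC.1.eigenvalues j) := by
  have hH : (herFun f C).IsHermitian := herFun_isHermitian f hC.1
  have h1 : sInc hH.eigenvalues = sInc (f ∘ hC.1.eigenvalues) :=
    sInc_eq_of_decomp (spectral_decomp hH) (herFun_decomp f hC.1)
  rw [eigVal, dif_pos hH]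
  show sInc hH.eigenvalues j.rev = _
  rw [h1, sInc_comp_antitone (fun i => hC.eigenvalues_pos i) hf j.rev, Fin.rev_rev]

lemma mpow_posDef {A : Matrix (Fin n) (Fin n) ℂ} (hA : A.PosDef) (r : ℝ) :
    (mpow A r).PosDef := by
  rw [mpow, herFun_decomp _ hA.1]
  exact posDef_conj_diag _ (fun i => Real.rpow_pos_of_pos (hA.eigenvalues_pos i) r)

lemma tangent_psd {A : Matrix (Fin n) (Fin n) ℂ} (hA : A.PosDef) {q s μ : ℝ}
    (hs : 1 ≤ s) (hμ : 0 < μ) :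
    (mpow A (q * s) - (((1 - s) * μ ^ s) • (1 : Matrix (Fin n) (Fin n) ℂ)
      + (s * μ ^ (s - 1)) • mpow A q)).PosSemidef := by
  have hw0 : ∀ i, 0 ≤ hA.1.eigenvalues i ^ (q * s)
      - ((1 - s) * μ ^ s + s * μ ^ (s - 1) * hA.1.eigenvalues i ^ q) := by
    intro i
    have hyi : 0 < hA.1.eigenvalues i ^ q :=
      Real.rpow_pos_of_pos (hA.eigenvalues_pos i) q
    have h2 := scalar_tangent hyi hμ hs
    have hqs : hA.1.eigenvalues i ^ (q * s) = (hA.1.eigenvalues i ^ q) ^ s :=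
      Real.rpow_mul (hA.eigenvalues_pos i).le q s
    rw [hqs]
    linarith
  have hdiag : Matrix.diagonal (fun i => ((hA.1.eigenvalues i ^ (q * s)
        - ((1 - s) * μ ^ s + s * μ ^ (s - 1) * hA.1.eigenvalues i ^ q) : ℝ) : ℂ)) =
      Matrix.diagonal (fun i => ((hA.1.eigenvalues i ^ (q * s) : ℝ) : ℂ))
      - ((((1 - s) * μ ^ s : ℝ) : ℂ) • 1
        + (((s * μ ^ (s - 1) : ℝ)) : ℂ) •
          Matrix.diagonal (fun i => ((hA.1.eigenvalues i ^ q : ℝ) : ℂ))) := by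
    ext i j
    by_cases h : i = j
    · subst h
      simp only [Matrix.diagonal_apply_eq, Matrix.sub_apply, Matrix.add_apply,
        Matrix.smul_apply, Matrix.one_apply_eq, smul_eq_mul, mul_one]
      push_cast
      ring
    · simp [Matrix.diagonal_apply_ne _ h, Matrix.one_apply_ne h]
  have hUU : (hA.1.eigenvectorUnitary : Matrix (Fin n) (Fin n) ℂ) *
      star (hA.1.eigenvectorUnitary : Matrix (Fin n) (Fin n) ℂ) = 1 :=
    Matrix.mem_unitaryGroup_iff.mp hA.1.eigenvectorUnitary.2
  have key : mpow A (q * s) - (((1 - s) * μ ^ s) • (1 : Matrix (Fin n) (Fin n) ℂ)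
      + (s * μ ^ (s - 1)) • mpow A q)
      = (hA.1.eigenvectorUnitary : Matrix (Fin n) (Fin n) ℂ) *
        Matrix.diagonal (fun i => ((hA.1.eigenvalues i ^ (q * s)
          - ((1 - s) * μ ^ s + s * μ ^ (s - 1) * hA.1.eigenvalues i ^ q) : ℝ) : ℂ)) *
        star (hA.1.eigenvectorUnitary : Matrix (Fin n) (Fin n) ℂ) := by
    rw [mpow, mpow, herFun_decomp _ hA.1, herFun_decomp _ hA.1, real_smul_eq, real_smul_eq,
      hdiag]
    simp only [mul_sub, sub_mul, mul_add, add_mul, mul_smul_comm, smul_mul_assoc, mul_one]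
    simp only [hUU]
  rw [key]
  exact posSemidef_conj_diag _ hw0

end Stmt2Aux

open Stmt2Aux

/-- for positive definite `A, B`, `t ∈ [0,1]` and `p ≤ p' < 0`,
`λ_j(((1-t)Aᵖ + tBᵖ)^{1/p}) ≤ λ_j(((1-t)A^{p'} + tB^{p'})^{1/p'})`. -/
theorem stmt2 {n : ℕ} (A B : Matrix (Fin n) (Fin n) ℂ) (hA : A.PosDef) (hB : B.PosDef)
    (t : ℝ) (ht0 : 0 ≤ t) (ht1 : t ≤ 1)
    (p p' : ℝ) (hpp' : p ≤ p') (hp' : p' < 0) (j : Fin n) :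
    eigVal (mpow ((1 - t) • mpow A p + t • mpow B p) (1 / p)) j ≤
      eigVal (mpow ((1 - t) • mpow A p' + t • mpow B p') (1 / p')) j := by
  classical
  have hp : p < 0 := lt_of_le_of_lt hpp' hp'
  have hp0 : p ≠ 0 := hp.ne
  have hp'0 : p' ≠ 0 := hp'.ne
  set s : ℝ := p / p' with hs_def
  have hs1 : 1 ≤ s := by
    rw [hs_def, le_div_iff_of_neg hp']
    linarith
  have combo_pd : ∀ r : ℝ, ((1 - t) • mpow A r + t • mpow B r).PosDef := by
    intro r
    rcases ht1.lt_or_eq with h | h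
    · exact (real_smul_posDef (by linarith) (mpow_posDef hA r)).add_posSemidef
        (real_smul_posSemidef ht0 (mpow_posDef hB r).posSemidef)
    · subst h
      simpa using mpow_posDef hB r
  set C := (1 - t) • mpow A p + t • mpow B p with hCdef
  set D := (1 - t) • mpow A p' + t • mpow B p' with hDdef
  have hC : C.PosDef := combo_pd p
  have hD : D.PosDef := combo_pd p'
  clear_value C D
  set μ := sInc hD.1.eigenvalues j with hμdef
  have hμ : 0 < μ := sInc_pos (fun i => hD.eigenvalues_pos i) j
  set c : ℝ := (1 - s) * μ ^ s with hc
  set dd : ℝ := s * μ ^ (s - 1) with hddc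
  have hdd : 0 ≤ dd := by
    rw [hddc]
    exact mul_nonneg (by linarith) (Real.rpow_pos_of_pos hμ _).le
  set E := c • (1 : Matrix (Fin n) (Fin n) ℂ) + dd • D with hEdef
  clear_value E
  have hps : p' * s = p := by
    rw [hs_def]
    field_simp
  have tA := tangent_psd hA (q := p') (s := s) (μ := μ) hs1 hμ
  have tB := tangent_psd hB (q := p') (s := s) (μ := μ) hs1 hμ
  rw [hps, ← hc, ← hddc] at tA tB
  have hCE : C - E = (1 - t) • (mpow A p - (c • 1 + dd • mpow A p'))
      + t • (mpow B p - (c • 1 + dd • mpow B p')) := by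
    rw [hCdef, hEdef, hDdef]
    module
  have hPSD : (C - E).PosSemidef := by
    rw [hCE]
    exact (real_smul_posSemidef (by linarith) tA).add (real_smul_posSemidef ht0 tB)
  have hEdec : E = (hD.1.eigenvectorUnitary : Matrix (Fin n) (Fin n) ℂ) *
      Matrix.diagonal (fun i => ((c + dd * hD.1.eigenvalues i : ℝ) : ℂ)) *
      star (hD.1.eigenvectorUnitary : Matrix (Fin n) (Fin n) ℂ) := by
    have hsplit : Matrix.diagonal (fun i => ((c + dd * hD.1.eigenvalues i : ℝ) : ℂ))
        = (c : ℂ) • 1 + (dd : ℂ) • Matrix.diagonal (fun i => ((hD.1.eigenvalues i : ℝ) : ℂ)) := by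
      ext i j
      by_cases h : i = j
      · subst h
        simp only [Matrix.diagonal_apply_eq, Matrix.add_apply, Matrix.smul_apply,
          Matrix.one_apply_eq, smul_eq_mul, mul_one]
        push_cast
        ring
      · simp [Matrix.diagonal_apply_ne _ h, Matrix.one_apply_ne h]
    have hUU : (hD.1.eigenvectorUnitary : Matrix (Fin n) (Fin n) ℂ) *
        star (hD.1.eigenvectorUnitary : Matrix (Fin n) (Fin n) ℂ) = 1 :=
      Matrix.mem_unitaryGroup_iff.mp hD.1.eigenvectorUnitary.2
    rw [hsplit]
    simp only [mul_add, add_mul, mul_smul_comm, smul_mul_assoc, mul_one]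
    simp only [hUU]
    rw [hEdef, real_smul_eq, real_smul_eq, ← spectral_decomp hD.1]
  have hWeyl : sInc (fun i => c + dd * hD.1.eigenvalues i) j ≤ sInc hC.1.eigenvalues j :=
    weyl_core hEdec (spectral_decomp hC.1) hPSD j
  have haff : sInc (fun i => c + dd * hD.1.eigenvalues i) = fun k => c + dd * sInc hD.1.eigenvalues k := by
    have hmono : Monotone (fun y : ℝ => c + dd * y) := by
      intro a b hab
      dsimp only
      nlinarith
    exact sInc_comp_monotone hmono hD.1.eigenvalues
  have hmain : μ ^ s ≤ sInc hC.1.eigenvalues j := by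
    have hss : μ ^ (s - 1) * μ = μ ^ s := by
      rw [Real.rpow_sub hμ, Real.rpow_one]
      field_simp
    have h1 : c + dd * μ = μ ^ s := by
      rw [hc, hddc]
      nlinarith [hss]
    calc μ ^ s = c + dd * μ := h1.symm
      _ = sInc (fun i => c + dd * hD.1.eigenvalues i) j := by rw [haff]
      _ ≤ _ := hWeyl
  have hanti_p : ∀ ⦃x y : ℝ⦄, 0 < x → x ≤ y → y ^ (1/p) ≤ x ^ (1/p) :=
    fun x y hx hxy => Real.rpow_le_rpow_of_nonpos hx hxy (by
      rw [one_div_nonpos]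
      exact hp.le)
  have hanti_p' : ∀ ⦃x y : ℝ⦄, 0 < x → x ≤ y → y ^ (1/p') ≤ x ^ (1/p') :=
    fun x y hx hxy => Real.rpow_le_rpow_of_nonpos hx hxy (by
      rw [one_div_nonpos]
      exact hp'.le)
  have hlhs : eigVal (mpow C (1/p)) j = (sInc hC.1.eigenvalues j) ^ (1/p) := by
    rw [mpow]
    exact eigVal_herFun_anti hC hanti_p j
  have hrhs : eigVal (mpow D (1/p')) j = μ ^ (1/p') := by
    rw [mpow]
    exact eigVal_herFun_anti hD hanti_p' j
  rw [hlhs, hrhs]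
  calc (sInc hC.1.eigenvalues j) ^ (1/p) ≤ (μ ^ s) ^ (1/p) :=
      hanti_p (Real.rpow_pos_of_pos hμ s) hmain
    _ = μ ^ (s * (1/p)) := (Real.rpow_mul hμ.le s (1/p)).symm
    _ = μ ^ (1/p') := by
        have harr : s * (1/p) = 1/p' := by
          rw [hs_def]
          field_simp
        rw [harr]
end

section
/- Let A and B be n×n complex positive definite matrices, t ∈ [0,1], and let p < 0 < p'. Then for each j ∈ {1,…,n}, λ_j(((1-t)A^p + tB^p)^{1/p}) ≤ λ_j(((1-t)A^{p'} + tB^{p'})^{1/p'}). -/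
open scoped BigOperators ComplexOrder

namespace Stmt3

open Matrix Finset

variable {n : ℕ}

lemma tl_apply (Z : Matrix (Fin n) (Fin n) ℂ) (x : EuclideanSpace ℂ (Fin n)) :
    Matrix.toEuclideanLin Z x = (WithLp.equiv 2 _).symm (Z *ᵥ (WithLp.equiv 2 _ x)) := by
  rfl

lemma inner_tl (Z : Matrix (Fin n) (Fin n) ℂ) (x : EuclideanSpace ℂ (Fin n)) :
    (inner ℂ x (Matrix.toEuclideanLin Z x) : ℂ)
      = dotProduct (star (WithLp.equiv 2 _ x)) (Z *ᵥ (WithLp.equiv 2 _ x)) := by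
  rw [EuclideanSpace.inner_eq_star_dotProduct, dotProduct_comm]
  rfl

lemma herFun_isHermitian {M : Matrix (Fin n) (Fin n) ℂ} (hM : M.IsHermitian) (f : ℝ → ℝ) :
    (herFun f M).IsHermitian := by
  rw [herFun, dif_pos hM]
  unfold Matrix.IsHermitian
  rw [Matrix.conjTranspose_mul, Matrix.conjTranspose_mul, Matrix.diagonal_conjTranspose]
  have : star (fun i => (f (hM.eigenvalues i) : ℂ)) = fun i => (f (hM.eigenvalues i) : ℂ) := by
    funext i
    simp [Complex.star_def, Complex.conj_ofReal]
  rw [this, Matrix.star_eq_conjTranspose, Matrix.conjTranspose_conjTranspose, mul_assoc]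

lemma herFun_tl_eigen {M : Matrix (Fin n) (Fin n) ℂ} (hM : M.IsHermitian) (f : ℝ → ℝ)
    (i : Fin n) :
    Matrix.toEuclideanLin (herFun f M) (hM.eigenvectorBasis i)
      = (f (hM.eigenvalues i) : ℂ) • (hM.eigenvectorBasis i) := by
  have h1 : herFun f M *ᵥ ⇑(hM.eigenvectorBasis i)
      = (f (hM.eigenvalues i) : ℂ) • ⇑(hM.eigenvectorBasis i) := by
    rw [herFun, dif_pos hM, ← Matrix.mulVec_mulVec, ← Matrix.mulVec_mulVec,
      hM.star_eigenvectorUnitary_mulVec, Matrix.diagonal_mulVec_single, mul_one]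
    have hs : (Pi.single i (f (hM.eigenvalues i) : ℂ) : Fin n → ℂ)
        = (f (hM.eigenvalues i) : ℂ) • (Pi.single i (1 : ℂ) : Fin n → ℂ) := by
      rw [← Pi.single_smul' i ((f (hM.eigenvalues i) : ℂ)) 1, smul_eq_mul, mul_one]
    rw [hs, Matrix.mulVec_smul, hM.eigenvectorUnitary_mulVec]
  apply (WithLp.equiv 2 _).injective
  simpa [tl_apply] using h1

lemma tl_eigen {M : Matrix (Fin n) (Fin n) ℂ} (hM : M.IsHermitian) (i : Fin n) :
    Matrix.toEuclideanLin M (hM.eigenvectorBasis i)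
      = (hM.eigenvalues i : ℂ) • (hM.eigenvectorBasis i) := by
  apply (WithLp.equiv 2 _).injective
  simpa [tl_apply] using hM.mulVec_eigenvectorBasis i

lemma inner_tl_eq_sum (Z : Matrix (Fin n) (Fin n) ℂ)
    (b : OrthonormalBasis (Fin n) ℂ (EuclideanSpace ℂ (Fin n))) (μ : Fin n → ℝ)
    (hb : ∀ i, Matrix.toEuclideanLin Z (b i) = (μ i : ℂ) • b i)
    (x : EuclideanSpace ℂ (Fin n)) :
    (inner ℂ x (Matrix.toEuclideanLin Z x) : ℂ)
      = ((∑ i, μ i * ‖(inner ℂ (b i) x : ℂ)‖ ^ 2 : ℝ) : ℂ) := by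
  have hTx : Matrix.toEuclideanLin Z x
      = ∑ i, ((inner ℂ (b i) x : ℂ) * (μ i : ℂ)) • b i := by
    conv_lhs => rw [← b.sum_repr' x, map_sum]
    refine Finset.sum_congr rfl fun i _ => ?_
    rw [_root_.map_smul, hb i, smul_smul]
  rw [hTx, inner_sum]
  push_cast
  refine Finset.sum_congr rfl fun i _ => ?_
  rw [inner_smul_right, ← inner_conj_symm x (b i),
    mul_comm ((inner ℂ (b i) x : ℂ)) ((μ i : ℂ)), mul_assoc, RCLike.mul_conj]
  norm_num

lemma sum_weights (b : OrthonormalBasis (Fin n) ℂ (EuclideanSpace ℂ (Fin n)))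
    (x : EuclideanSpace ℂ (Fin n)) :
    ∑ i, ‖(inner ℂ (b i) x : ℂ)‖ ^ 2 = ‖x‖ ^ 2 := by
  have h := b.sum_inner_mul_inner x x
  have h2 : ∀ i : Fin n, (inner ℂ x (b i) : ℂ) * inner ℂ (b i) x
      = ((‖(inner ℂ (b i) x : ℂ)‖ ^ 2 : ℝ) : ℂ) := by
    intro i
    rw [← inner_conj_symm x (b i), mul_comm, RCLike.mul_conj]
    norm_num
  rw [Finset.sum_congr rfl (fun i _ => h2 i)] at h
  rw [inner_self_eq_norm_sq_to_K] at h
  have h3 : ((∑ i, ‖(inner ℂ (b i) x : ℂ)‖ ^ 2 : ℝ) : ℂ) = ((‖x‖ ^ 2 : ℝ) : ℂ) := by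
    push_cast at h ⊢
    exact h
  exact_mod_cast h3

lemma re_inner_tl (Z : Matrix (Fin n) (Fin n) ℂ)
    (b : OrthonormalBasis (Fin n) ℂ (EuclideanSpace ℂ (Fin n))) (μ : Fin n → ℝ)
    (hb : ∀ i, Matrix.toEuclideanLin Z (b i) = (μ i : ℂ) • b i)
    (x : EuclideanSpace ℂ (Fin n)) :
    (inner ℂ x (Matrix.toEuclideanLin Z x) : ℂ).re
      = ∑ i, μ i * ‖(inner ℂ (b i) x : ℂ)‖ ^ 2 := by
  rw [inner_tl_eq_sum Z b μ hb x, Complex.ofReal_re]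

lemma qf_le_of (Z : Matrix (Fin n) (Fin n) ℂ)
    (b : OrthonormalBasis (Fin n) ℂ (EuclideanSpace ℂ (Fin n))) (μ : Fin n → ℝ)
    (hb : ∀ i, Matrix.toEuclideanLin Z (b i) = (μ i : ℂ) • b i)
    (x : EuclideanSpace ℂ (Fin n)) (c : ℝ)
    (h : ∀ i, μ i ≤ c ∨ (inner ℂ (b i) x : ℂ) = 0) :
    (inner ℂ x (Matrix.toEuclideanLin Z x) : ℂ).re ≤ c * ‖x‖ ^ 2 := by
  rw [re_inner_tl Z b μ hb x, ← sum_weights b x, Finset.mul_sum]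
  refine Finset.sum_le_sum fun i _ => ?_
  rcases h i with h' | h'
  · exact mul_le_mul_of_nonneg_right h' (by positivity)
  · simp [h']

lemma qf_ge_of (Z : Matrix (Fin n) (Fin n) ℂ)
    (b : OrthonormalBasis (Fin n) ℂ (EuclideanSpace ℂ (Fin n))) (μ : Fin n → ℝ)
    (hb : ∀ i, Matrix.toEuclideanLin Z (b i) = (μ i : ℂ) • b i)
    (x : EuclideanSpace ℂ (Fin n)) (c : ℝ)
    (h : ∀ i, c ≤ μ i ∨ (inner ℂ (b i) x : ℂ) = 0) :
    c * ‖x‖ ^ 2 ≤ (inner ℂ x (Matrix.toEuclideanLin Z x) : ℂ).re := by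
  rw [re_inner_tl Z b μ hb x, ← sum_weights b x, Finset.mul_sum]
  refine Finset.sum_le_sum fun i _ => ?_
  rcases h i with h' | h'
  · exact mul_le_mul_of_nonneg_right h' (by positivity)
  · simp [h']

lemma exists_orth (v w : Fin n → EuclideanSpace ℂ (Fin n)) (s r : Finset (Fin n))
    (h : s.card + r.card < n) :
    ∃ x : EuclideanSpace ℂ (Fin n), x ≠ 0 ∧ (∀ i ∈ s, (inner ℂ (v i) x : ℂ) = 0) ∧
      (∀ i ∈ r, (inner ℂ (w i) x : ℂ) = 0) := by
  letI : DecidableEq (EuclideanSpace ℂ (Fin n)) := Classical.decEq _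
  set K : Submodule ℂ (EuclideanSpace ℂ (Fin n)) :=
    Submodule.span ℂ ((s.image v ∪ r.image w : Finset _) : Set (EuclideanSpace ℂ (Fin n)))
  have hK : Module.finrank ℂ K < n := by
    calc Module.finrank ℂ K ≤ (s.image v ∪ r.image w).card :=
          finrank_span_finset_le_card _
    _ ≤ s.card + r.card := by
        refine (Finset.card_union_le _ _).trans ?_
        exact Nat.add_le_add (Finset.card_image_le) (Finset.card_image_le)
    _ < n := h
  have horth : 0 < Module.finrank ℂ Kᗮ := by
    have := Submodule.finrank_add_finrank_orthogonal K
    rw [finrank_euclideanSpace_fin] at this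
    omega
  obtain ⟨x, hxK, hx0⟩ := Submodule.exists_mem_ne_zero_of_ne_bot (p := Kᗮ) (by
    intro hbot
    rw [hbot] at horth
    simp at horth)
  refine ⟨x, hx0, fun i hi => ?_, fun i hi => ?_⟩
  · exact (Submodule.mem_orthogonal K x).mp hxK _ (Submodule.subset_span (by
      simp only [Finset.coe_union, Set.mem_union, Finset.coe_image, Set.mem_image]
      exact Or.inl ⟨i, Finset.mem_coe.mpr hi, rfl⟩))
  · exact (Submodule.mem_orthogonal K x).mp hxK _ (Submodule.subset_span (by
      simp only [Finset.coe_union, Set.mem_union, Finset.coe_image, Set.mem_image]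
      exact Or.inr ⟨i, Finset.mem_coe.mpr hi, rfl⟩))

lemma eig_le (Z : Matrix (Fin n) (Fin n) ℂ)
    (b c : OrthonormalBasis (Fin n) ℂ (EuclideanSpace ℂ (Fin n))) (μ d : Fin n → ℝ)
    (hμ : Antitone μ) (hd : Antitone d)
    (hb : ∀ i, Matrix.toEuclideanLin Z (b i) = (μ i : ℂ) • b i)
    (hc : ∀ i, Matrix.toEuclideanLin Z (c i) = (d i : ℂ) • c i)
    (k : Fin n) : d k ≤ μ k := by
  obtain ⟨x, hx0, hbx, hcx⟩ := exists_orth (fun i => b i) (fun i => c i)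
    (Finset.Iio k) (Finset.Ioi k) (by
      rw [Fin.card_Iio, Fin.card_Ioi]
      have := k.isLt
      omega)
  have h1 : d k * ‖x‖ ^ 2 ≤ (inner ℂ x (Matrix.toEuclideanLin Z x) : ℂ).re := by
    refine qf_ge_of Z c d hc x (d k) fun i => ?_
    rcases le_or_gt i k with h | h
    · exact Or.inl (hd h)
    · exact Or.inr (hcx i (Finset.mem_Ioi.mpr h))
  have h2 : (inner ℂ x (Matrix.toEuclideanLin Z x) : ℂ).re ≤ μ k * ‖x‖ ^ 2 := by
    refine qf_le_of Z b μ hb x (μ k) fun i => ?_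
    rcases lt_or_ge i k with h | h
    · exact Or.inr (hbx i (Finset.mem_Iio.mpr h))
    · exact Or.inl (hμ h)
  have hn : 0 < ‖x‖ ^ 2 := by
    have : ‖x‖ ≠ 0 := fun h => hx0 (norm_eq_zero.mp h)
    positivity
  exact (mul_le_mul_iff_left₀ hn).mp (h1.trans h2)

lemma eigVal_eq_sorted {M : Matrix (Fin n) (Fin n) ℂ} (hM : M.IsHermitian) (i : Fin n) :
    eigVal M i = hM.eigenvalues (Tuple.sort hM.eigenvalues i.rev) := by
  rw [eigVal, dif_pos hM]
  rfl

lemma eigVal_antitone {M : Matrix (Fin n) (Fin n) ℂ} (hM : M.IsHermitian) :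
    Antitone (eigVal M) := by
  intro i j hij
  rw [eigVal_eq_sorted hM, eigVal_eq_sorted hM]
  exact Tuple.monotone_sort hM.eigenvalues (Fin.rev_le_rev.mpr hij)

/-- Orthonormal eigenbasis of a Hermitian matrix ordered so that the eigenvalues
are decreasing (i.e. equal to `eigVal`). -/
noncomputable def sortedBasis {M : Matrix (Fin n) (Fin n) ℂ} (hM : M.IsHermitian) :
    OrthonormalBasis (Fin n) ℂ (EuclideanSpace ℂ (Fin n)) :=
  hM.eigenvectorBasis.reindex ((Fin.revPerm.trans (Tuple.sort hM.eigenvalues)).symm)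

lemma sortedBasis_apply {M : Matrix (Fin n) (Fin n) ℂ} (hM : M.IsHermitian) (i : Fin n) :
    sortedBasis hM i = hM.eigenvectorBasis (Tuple.sort hM.eigenvalues i.rev) := by
  rw [sortedBasis, OrthonormalBasis.reindex_apply]
  simp

lemma tl_sortedBasis {M : Matrix (Fin n) (Fin n) ℂ} (hM : M.IsHermitian) (i : Fin n) :
    Matrix.toEuclideanLin M (sortedBasis hM i) = (eigVal M i : ℂ) • sortedBasis hM i := by
  rw [sortedBasis_apply, tl_eigen hM, eigVal_eq_sorted hM, ← sortedBasis_apply hM]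

lemma eigVal_eq {Z : Matrix (Fin n) (Fin n) ℂ} (hZ : Z.IsHermitian)
    (b : OrthonormalBasis (Fin n) ℂ (EuclideanSpace ℂ (Fin n))) (μ : Fin n → ℝ)
    (hμ : Antitone μ)
    (hb : ∀ i, Matrix.toEuclideanLin Z (b i) = (μ i : ℂ) • b i) : eigVal Z = μ := by
  funext k
  exact le_antisymm
    (eig_le Z b (sortedBasis hZ) μ (eigVal Z) hμ (eigVal_antitone hZ) hb (tl_sortedBasis hZ) k)
    (eig_le Z (sortedBasis hZ) b (eigVal Z) μ (eigVal_antitone hZ) hμ (tl_sortedBasis hZ) hb k)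

lemma eigVal_pos {M : Matrix (Fin n) (Fin n) ℂ} (hM : M.PosDef) (i : Fin n) :
    0 < eigVal M i := by
  rw [eigVal_eq_sorted hM.1]
  exact hM.eigenvalues_pos _

lemma herFun_tl_sortedBasis {M : Matrix (Fin n) (Fin n) ℂ} (hM : M.IsHermitian) (f : ℝ → ℝ)
    (i : Fin n) :
    Matrix.toEuclideanLin (herFun f M) (sortedBasis hM i)
      = (f (eigVal M i) : ℂ) • sortedBasis hM i := by
  rw [sortedBasis_apply, herFun_tl_eigen hM f, eigVal_eq_sorted hM, ← sortedBasis_apply hM]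

lemma eigVal_herFun_incr {M : Matrix (Fin n) (Fin n) ℂ} (hM : M.PosDef) (f : ℝ → ℝ)
    (hf : ∀ x y, 0 < x → x ≤ y → f x ≤ f y) :
    eigVal (herFun f M) = fun i => f (eigVal M i) := by
  refine eigVal_eq (herFun_isHermitian hM.1 f) (sortedBasis hM.1) _ ?_
    (fun i => herFun_tl_sortedBasis hM.1 f i)
  intro i j hij
  exact hf _ _ (eigVal_pos hM j) (eigVal_antitone hM.1 hij)

lemma eigVal_herFun_decr {M : Matrix (Fin n) (Fin n) ℂ} (hM : M.PosDef) (f : ℝ → ℝ)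
    (hf : ∀ x y, 0 < x → x ≤ y → f y ≤ f x) :
    eigVal (herFun f M) = fun i => f (eigVal M i.rev) := by
  refine eigVal_eq (herFun_isHermitian hM.1 f) ((sortedBasis hM.1).reindex Fin.revPerm) _ ?_ ?_
  · intro i j hij
    exact hf _ _ (eigVal_pos hM i.rev)
      (eigVal_antitone hM.1 (Fin.rev_le_rev.mpr hij))
  · intro i
    rw [OrthonormalBasis.reindex_apply, Fin.revPerm_symm, Fin.revPerm_apply]
    exact herFun_tl_sortedBasis hM.1 f i.rev

lemma herFun_posDef {M : Matrix (Fin n) (Fin n) ℂ} (hM : M.PosDef) (f : ℝ → ℝ)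
    (hf : ∀ x, 0 < x → 0 < f x) : (herFun f M).PosDef := by
  refine posDef_iff_dotProduct_mulVec.mpr ⟨herFun_isHermitian hM.1 f, fun x hx => ?_⟩
  set xV : EuclideanSpace ℂ (Fin n) := (WithLp.equiv 2 _).symm x with hxV
  have hbr : star x ⬝ᵥ (herFun f M *ᵥ x)
      = (inner ℂ xV (Matrix.toEuclideanLin (herFun f M) xV) : ℂ) := by
    rw [inner_tl]
    simp [hxV]
  rw [hbr, inner_tl_eq_sum _ hM.1.eigenvectorBasis (fun i => f (hM.1.eigenvalues i))
    (herFun_tl_eigen hM.1 f) xV, Complex.zero_lt_real]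
  have hxV0 : xV ≠ 0 := by
    simpa [hxV] using hx
  have hnorm : 0 < ‖xV‖ ^ 2 := by
    have : ‖xV‖ ≠ 0 := fun h => hxV0 (norm_eq_zero.mp h)
    positivity
  have hw : ∑ i, ‖(inner ℂ (hM.1.eigenvectorBasis i) xV : ℂ)‖ ^ 2 = ‖xV‖ ^ 2 :=
    sum_weights _ _
  have hex : ∃ i ∈ Finset.univ (α := Fin n),
      0 < f (hM.1.eigenvalues i) * ‖(inner ℂ (hM.1.eigenvectorBasis i) xV : ℂ)‖ ^ 2 := by
    by_contra hcon
    push_neg at hcon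
    have : ∀ i : Fin n, ‖(inner ℂ (hM.1.eigenvectorBasis i) xV : ℂ)‖ ^ 2 = 0 := by
      intro i
      have h1 := hcon i (Finset.mem_univ i)
      have h2 := hf _ (hM.eigenvalues_pos i)
      nlinarith [sq_nonneg ‖(inner ℂ (hM.1.eigenvectorBasis i) xV : ℂ)‖]
    have hzero : ∑ i, ‖(inner ℂ (hM.1.eigenvectorBasis i) xV : ℂ)‖ ^ 2 = 0 :=
      Finset.sum_eq_zero (fun i _ => this i)
    rw [hzero] at hw
    exact hnorm.ne' hw.symm
  obtain ⟨i0, _, hi0⟩ := hex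
  refine Finset.sum_pos' (fun i _ => ?_) ⟨i0, Finset.mem_univ i0, hi0⟩
  exact mul_nonneg (hf _ (hM.eigenvalues_pos i)).le (by positivity)

lemma jensen_pointwise {M : Matrix (Fin n) (Fin n) ℂ} (hM : M.PosDef) (q : ℝ)
    (x : EuclideanSpace ℂ (Fin n)) (hx : ‖x‖ = 1) :
    Real.exp (q * (inner ℂ x (Matrix.toEuclideanLin (herFun Real.log M) x) : ℂ).re)
      ≤ (inner ℂ x (Matrix.toEuclideanLin (herFun (fun s => s ^ q) M) x) : ℂ).re := by
  set b := hM.1.eigenvectorBasis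
  set w : Fin n → ℝ := fun i => ‖(inner ℂ (b i) x : ℂ)‖ ^ 2 with hwdef
  rw [re_inner_tl _ b (fun i => Real.log (hM.1.eigenvalues i)) (herFun_tl_eigen hM.1 _) x,
    re_inner_tl _ b (fun i => (hM.1.eigenvalues i) ^ q) (herFun_tl_eigen hM.1 _) x]
  have hw1 : ∑ i, w i = 1 := by
    have := sum_weights b x
    rw [hx, one_pow] at this
    exact this
  have key := convexOn_exp.map_sum_le (t := Finset.univ)
    (w := w) (p := fun i => q * Real.log (hM.1.eigenvalues i))
    (fun i _ => by positivity) hw1 (fun i _ => Set.mem_univ _)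
  calc Real.exp (q * ∑ i, Real.log (hM.1.eigenvalues i) * w i)
      = Real.exp (∑ i, w i • (q * Real.log (hM.1.eigenvalues i))) := by
        rw [Finset.mul_sum]
        congr 1
        refine Finset.sum_congr rfl fun i _ => ?_
        simp [smul_eq_mul]
        ring
    _ ≤ ∑ i, w i • Real.exp (q * Real.log (hM.1.eigenvalues i)) := key
    _ = ∑ i, (hM.1.eigenvalues i) ^ q * w i := by
        refine Finset.sum_congr rfl fun i _ => ?_
        rw [smul_eq_mul, Real.rpow_def_of_pos (hM.eigenvalues_pos i), mul_comm (Real.log _) q]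
        ring

lemma real_smul_matrix (r : ℝ) (M : Matrix (Fin n) (Fin n) ℂ) :
    r • M = (r : ℂ) • M := by
  ext i j
  simp [Matrix.smul_apply, Complex.real_smul]

lemma smul_isHermitian {M : Matrix (Fin n) (Fin n) ℂ} (hM : M.IsHermitian) (r : ℝ) :
    (r • M).IsHermitian := by
  unfold Matrix.IsHermitian
  rw [Matrix.conjTranspose_smul, star_trivial, hM.eq]

lemma comb_pos {z₁ z₂ : ℂ} {t : ℝ} (h1 : 0 < z₁) (h2 : 0 < z₂) (ht0 : 0 ≤ t) (ht1 : t ≤ 1) :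
    0 < (1 - t) • z₁ + t • z₂ := by
  rw [Complex.lt_def] at h1 h2 ⊢
  obtain ⟨h1r, h1i⟩ := h1
  obtain ⟨h2r, h2i⟩ := h2
  simp only [Complex.real_smul, Complex.add_re, Complex.add_im, Complex.mul_re, Complex.mul_im,
    Complex.ofReal_re, Complex.ofReal_im, Complex.zero_re, Complex.zero_im] at *
  constructor
  · rcases eq_or_lt_of_le ht1 with rfl | h
    · nlinarith
    · nlinarith
  · nlinarith

lemma comb_mulVec (P Q : Matrix (Fin n) (Fin n) ℂ) (t : ℝ) (x : Fin n → ℂ) :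
    star x ⬝ᵥ (((1 - t) • P + t • Q) *ᵥ x)
      = (1 - t) • (star x ⬝ᵥ (P *ᵥ x)) + t • (star x ⬝ᵥ (Q *ᵥ x)) := by
  rw [Matrix.add_mulVec, dotProduct_add, Matrix.smul_mulVec,
    Matrix.smul_mulVec, dotProduct_smul, dotProduct_smul]

lemma comb_posDef {P Q : Matrix (Fin n) (Fin n) ℂ} {t : ℝ} (hP : P.PosDef) (hQ : Q.PosDef)
    (ht0 : 0 ≤ t) (ht1 : t ≤ 1) : ((1 - t) • P + t • Q).PosDef := by
  refine posDef_iff_dotProduct_mulVec.mpr ⟨(smul_isHermitian hP.1 (1 - t)).add (smul_isHermitian hQ.1 t), fun x hx => ?_⟩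
  rw [comb_mulVec]
  exact comb_pos (hP.dotProduct_mulVec_pos hx) (hQ.dotProduct_mulVec_pos hx) ht0 ht1

lemma re_inner_comb (P Q : Matrix (Fin n) (Fin n) ℂ) (t : ℝ) (x : EuclideanSpace ℂ (Fin n)) :
    (inner ℂ x (Matrix.toEuclideanLin ((1 - t) • P + t • Q) x) : ℂ).re
      = (1 - t) * (inner ℂ x (Matrix.toEuclideanLin P x) : ℂ).re
        + t * (inner ℂ x (Matrix.toEuclideanLin Q x) : ℂ).re := by
  rw [real_smul_matrix, real_smul_matrix ((t : ℝ)), map_add, _root_.map_smul, _root_.map_smul]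
  rw [LinearMap.add_apply, LinearMap.smul_apply, LinearMap.smul_apply, inner_add_right,
    inner_smul_right, inner_smul_right, Complex.add_re]
  simp [Complex.mul_re, Complex.ofReal_re, Complex.ofReal_im]

lemma hJ_comb {A B : Matrix (Fin n) (Fin n) ℂ} (hA : A.PosDef) (hB : B.PosDef)
    {t : ℝ} (ht0 : 0 ≤ t) (ht1 : t ≤ 1) (q : ℝ) (x : EuclideanSpace ℂ (Fin n)) (hx : ‖x‖ = 1) :
    Real.exp (q * (inner ℂ x (Matrix.toEuclideanLin ((1 - t) • mlog A + t • mlog B) x) : ℂ).re)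
      ≤ (inner ℂ x (Matrix.toEuclideanLin ((1 - t) • mpow A q + t • mpow B q) x) : ℂ).re := by
  rw [re_inner_comb, re_inner_comb]
  set ra := (inner ℂ x (Matrix.toEuclideanLin (mlog A) x) : ℂ).re with hra
  set rb := (inner ℂ x (Matrix.toEuclideanLin (mlog B) x) : ℂ).re with hrb
  have hJA : Real.exp (q * ra) ≤ (inner ℂ x (Matrix.toEuclideanLin (mpow A q) x) : ℂ).re :=
    jensen_pointwise hA q x hx
  have hJB : Real.exp (q * rb) ≤ (inner ℂ x (Matrix.toEuclideanLin (mpow B q) x) : ℂ).re :=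
    jensen_pointwise hB q x hx
  have harg : q * ((1 - t) * ra + t * rb) = (1 - t) * (q * ra) + t * (q * rb) := by ring
  rw [harg]
  have hconv : Real.exp ((1 - t) * (q * ra) + t * (q * rb))
      ≤ (1 - t) * Real.exp (q * ra) + t * Real.exp (q * rb) := by
    have h := convexOn_exp.2 (Set.mem_univ (q * ra)) (Set.mem_univ (q * rb))
      (show (0:ℝ) ≤ 1 - t by linarith) ht0 (show (1 - t) + t = 1 by ring)
    simpa [smul_eq_mul] using h
  refine hconv.trans (add_le_add ?_ ?_)
  · exact mul_le_mul_of_nonneg_left hJA (by linarith)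
  · exact mul_le_mul_of_nonneg_left hJB ht0

lemma core {Z L : Matrix (Fin n) (Fin n) ℂ} (hZ : Z.IsHermitian) (hL : L.IsHermitian)
    (q : ℝ) (j m : Fin n) (su : Finset (Fin n)) (hcard : su.card + (m : ℕ) < n)
    (hJ : ∀ x : EuclideanSpace ℂ (Fin n), ‖x‖ = 1 →
      Real.exp (q * (inner ℂ x (Matrix.toEuclideanLin L x) : ℂ).re)
        ≤ (inner ℂ x (Matrix.toEuclideanLin Z x) : ℂ).re)
    (hdir : ∀ x : EuclideanSpace ℂ (Fin n), ‖x‖ = 1 →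
      (∀ i ∈ su, (inner ℂ (sortedBasis hL i) x : ℂ) = 0) →
      q * eigVal L j ≤ q * (inner ℂ x (Matrix.toEuclideanLin L x) : ℂ).re) :
    Real.exp (q * eigVal L j) ≤ eigVal Z m := by
  obtain ⟨x, hx0, hux, hcx⟩ := exists_orth (fun i => sortedBasis hL i)
    (fun i => sortedBasis hZ i) su (Finset.Iio m) (by rw [Fin.card_Iio]; exact hcard)
  set c : ℂ := ((‖x‖ : ℂ))⁻¹ with hc
  set y : EuclideanSpace ℂ (Fin n) := c • x with hy
  have hxn : ‖x‖ ≠ 0 := fun h => hx0 (norm_eq_zero.mp h)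
  have hyu : ‖y‖ = 1 := by
    rw [hy, norm_smul, hc, norm_inv, Complex.norm_real, Real.norm_eq_abs,
      abs_of_nonneg (norm_nonneg x), inv_mul_cancel₀ hxn]
  have h1 : (inner ℂ y (Matrix.toEuclideanLin Z y) : ℂ).re ≤ eigVal Z m := by
    have h := qf_le_of Z (sortedBasis hZ) (eigVal Z) (tl_sortedBasis hZ) y (eigVal Z m)
      (fun i => by
        rcases lt_or_ge i m with hlt | hge
        · exact Or.inr (by rw [hy, inner_smul_right, hcx i (Finset.mem_Iio.mpr hlt), mul_zero])
        · exact Or.inl (eigVal_antitone hZ hge))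
    rwa [hyu, one_pow, mul_one] at h
  have h2 := hdir y hyu (fun i hi => by rw [hy, inner_smul_right, hux i hi, mul_zero])
  exact le_trans (le_trans (Real.exp_le_exp.mpr h2) (hJ y hyu)) h1

end Stmt3

/-- for positive definite `A, B`, `t ∈ [0,1]` and `p < 0 < p'`,
`λ_j(((1-t)Aᵖ + tBᵖ)^{1/p}) ≤ λ_j(((1-t)A^{p'} + tB^{p'})^{1/p'})`. -/
theorem stmt3 {n : ℕ} (A B : Matrix (Fin n) (Fin n) ℂ) (hA : A.PosDef) (hB : B.PosDef)
    (t : ℝ) (ht0 : 0 ≤ t) (ht1 : t ≤ 1)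
    (p p' : ℝ) (hp : p < 0) (hp' : 0 < p') (j : Fin n) :
    eigVal (mpow ((1 - t) • mpow A p + t • mpow B p) (1 / p)) j ≤
      eigVal (mpow ((1 - t) • mpow A p' + t • mpow B p') (1 / p')) j := by
  open Stmt3 in
  have hAp : (mpow A p).PosDef := herFun_posDef hA _ (fun x hx => Real.rpow_pos_of_pos hx p)
  have hBp : (mpow B p).PosDef := herFun_posDef hB _ (fun x hx => Real.rpow_pos_of_pos hx p)
  have hAp' : (mpow A p').PosDef := herFun_posDef hA _ (fun x hx => Real.rpow_pos_of_pos hx p')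
  have hBp' : (mpow B p').PosDef := herFun_posDef hB _ (fun x hx => Real.rpow_pos_of_pos hx p')
  have hY : ((1 - t) • mpow A p + t • mpow B p).PosDef := comb_posDef hAp hBp ht0 ht1
  have hX : ((1 - t) • mpow A p' + t • mpow B p').PosDef := comb_posDef hAp' hBp' ht0 ht1
  have hL : ((1 - t) • mlog A + t • mlog B).IsHermitian :=
    (smul_isHermitian (herFun_isHermitian hA.1 Real.log) (1 - t)).add
      (smul_isHermitian (herFun_isHermitian hB.1 Real.log) t)
  set L := (1 - t) • mlog A + t • mlog B with hLdef
  set μj := eigVal L j with hmuj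
  -- rewrite the two sides
  have hLHS : eigVal (mpow ((1 - t) • mpow A p + t • mpow B p) (1 / p)) j
      = (eigVal ((1 - t) • mpow A p + t • mpow B p) j.rev) ^ (1 / p) := by
    have h := eigVal_herFun_decr hY (fun s => s ^ (1 / p))
      (fun x y hx hxy => Real.rpow_le_rpow_of_nonpos hx hxy (le_of_lt (one_div_neg.mpr hp)))
    exact congrFun h j
  have hRHS : eigVal (mpow ((1 - t) • mpow A p' + t • mpow B p') (1 / p')) j
      = (eigVal ((1 - t) • mpow A p' + t • mpow B p') j) ^ (1 / p') := by
    have h := eigVal_herFun_incr hX (fun s => s ^ (1 / p'))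
      (fun x y hx hxy => Real.rpow_le_rpow hx.le hxy (le_of_lt (one_div_pos.mpr hp')))
    exact congrFun h j
  -- step (i): lower bound for eigVal Y (j.rev)
  have hstep1 : Real.exp (p * μj) ≤ eigVal ((1 - t) • mpow A p + t • mpow B p) j.rev := by
    refine core hY.1 hL p j j.rev (Finset.Iio j) ?_ ?_ ?_
    · rw [Fin.card_Iio, Fin.val_rev]
      have := j.isLt
      omega
    · intro x hx
      exact hJ_comb hA hB ht0 ht1 p x hx
    · intro x hx hzero
      refine mul_le_mul_of_nonpos_left ?_ hp.le
      have h := qf_le_of L (sortedBasis hL) (eigVal L) (tl_sortedBasis hL) x μj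
        (fun i => by
          rcases lt_or_ge i j with hlt | hge
          · exact Or.inr (hzero i (Finset.mem_Iio.mpr hlt))
          · exact Or.inl (eigVal_antitone hL hge))
      rwa [hx, one_pow, mul_one] at h
  -- step (ii): lower bound for eigVal X' j
  have hstep2 : Real.exp (p' * μj) ≤ eigVal ((1 - t) • mpow A p' + t • mpow B p') j := by
    refine core hX.1 hL p' j j (Finset.Ioi j) ?_ ?_ ?_
    · rw [Fin.card_Ioi]
      have := j.isLt
      omega
    · intro x hx
      exact hJ_comb hA hB ht0 ht1 p' x hx
    · intro x hx hzero
      refine mul_le_mul_of_nonneg_left ?_ hp'.le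
      have h := qf_ge_of L (sortedBasis hL) (eigVal L) (tl_sortedBasis hL) x μj
        (fun i => by
          rcases le_or_gt i j with hle | hgt
          · exact Or.inl (eigVal_antitone hL hle)
          · exact Or.inr (hzero i (Finset.mem_Ioi.mpr hgt)))
      rwa [hx, one_pow, mul_one] at h
  rw [hLHS, hRHS]
  have hexp1 : (Real.exp (p * μj)) ^ (1 / p) = Real.exp μj := by
    rw [Real.rpow_def_of_pos (Real.exp_pos _), Real.log_exp]
    congr 1
    field_simp [hp.ne]
  have hexp2 : (Real.exp (p' * μj)) ^ (1 / p') = Real.exp μj := by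
    rw [Real.rpow_def_of_pos (Real.exp_pos _), Real.log_exp]
    congr 1
    field_simp [hp'.ne']
  calc (eigVal ((1 - t) • mpow A p + t • mpow B p) j.rev) ^ (1 / p)
      ≤ (Real.exp (p * μj)) ^ (1 / p) :=
        Real.rpow_le_rpow_of_nonpos (Real.exp_pos _) hstep1 (le_of_lt (one_div_neg.mpr hp))
    _ = Real.exp μj := hexp1
    _ = (Real.exp (p' * μj)) ^ (1 / p') := hexp2.symm
    _ ≤ (eigVal ((1 - t) • mpow A p' + t • mpow B p') j) ^ (1 / p') :=
        Real.rpow_le_rpow (Real.exp_pos _).le hstep2 (le_of_lt (one_div_pos.mpr hp'))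
end

section
/- Let A and B be n×n complex positive definite matrices. Then tr(A #_{1/2} B) ≤ tr(A^{1/2} B^{1/2}). -/
open scoped BigOperators ComplexOrder

section Stmt13Aux

open Matrix

variable {n : ℕ} {A : Matrix (Fin n) (Fin n) ℂ}

lemma herFun_eq (hA : A.IsHermitian) (f : ℝ → ℝ) :
    herFun f A = (hA.eigenvectorUnitary : Matrix (Fin n) (Fin n) ℂ) *
      Matrix.diagonal (fun i => (f (hA.eigenvalues i) : ℂ)) *
      (star hA.eigenvectorUnitary : Matrix (Fin n) (Fin n) ℂ) :=
  dif_pos hA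

lemma herFun_isHermitian (hA : A.IsHermitian) (f : ℝ → ℝ) :
    (herFun f A).IsHermitian := by
  rw [herFun_eq hA f]
  have hD : star (Matrix.diagonal (fun i => (f (hA.eigenvalues i) : ℂ)))
      = Matrix.diagonal (fun i => (f (hA.eigenvalues i) : ℂ)) := by
    have hv : star (fun i => (f (hA.eigenvalues i) : ℂ)) = fun i => (f (hA.eigenvalues i) : ℂ) := by
      funext i
      simp [Pi.star_apply, Complex.star_def, Complex.conj_ofReal]
    rw [Matrix.star_eq_conjTranspose, Matrix.diagonal_conjTranspose, hv]
  show _ᴴ = _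
  rw [← Matrix.star_eq_conjTranspose]
  simp only [StarMul.star_mul, star_star, hD, Matrix.mul_assoc]

lemma herFun_mul (hA : A.IsHermitian) (f g : ℝ → ℝ) :
    herFun f A * herFun g A = herFun (fun x => f x * g x) A := by
  have h1 : (star hA.eigenvectorUnitary : Matrix (Fin n) (Fin n) ℂ) * hA.eigenvectorUnitary = 1 :=
    Matrix.UnitaryGroup.star_mul_self _
  rw [herFun_eq hA f, herFun_eq hA g, herFun_eq hA (fun x => f x * g x)]
  calc (hA.eigenvectorUnitary : Matrix (Fin n) (Fin n) ℂ) *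
      Matrix.diagonal (fun i => (f (hA.eigenvalues i) : ℂ)) *
      (star hA.eigenvectorUnitary : Matrix (Fin n) (Fin n) ℂ) *
      ((hA.eigenvectorUnitary : Matrix (Fin n) (Fin n) ℂ) *
      Matrix.diagonal (fun i => (g (hA.eigenvalues i) : ℂ)) *
      (star hA.eigenvectorUnitary : Matrix (Fin n) (Fin n) ℂ))
      = (hA.eigenvectorUnitary : Matrix (Fin n) (Fin n) ℂ) *
        (Matrix.diagonal (fun i => (f (hA.eigenvalues i) : ℂ)) *
         Matrix.diagonal (fun i => (g (hA.eigenvalues i) : ℂ))) *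
        (star hA.eigenvectorUnitary : Matrix (Fin n) (Fin n) ℂ) := by
        simp only [Matrix.mul_assoc]
        congr 1
        congr 1
        rw [← Matrix.mul_assoc, h1, Matrix.one_mul]
    _ = _ := by
        rw [Matrix.diagonal_mul_diagonal]
        congr 2
        funext i
        push_cast
        ring

lemma herFun_congr (hA : A.IsHermitian) {f g : ℝ → ℝ}
    (h : ∀ i, f (hA.eigenvalues i) = g (hA.eigenvalues i)) : herFun f A = herFun g A := by
  rw [herFun_eq hA f, herFun_eq hA g]
  have : (fun i => (f (hA.eigenvalues i) : ℂ)) = (fun i => (g (hA.eigenvalues i) : ℂ)) :=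
    funext fun i => by rw [h i]
  rw [this]

lemma herFun_one (hA : A.IsHermitian) : herFun (fun _ => (1:ℝ)) A = 1 := by
  rw [herFun_eq hA]
  simp only [Complex.ofReal_one, Matrix.diagonal_one, Matrix.mul_one]
  exact Unitary.coe_mul_star_self _

lemma herFun_id (hA : A.IsHermitian) : herFun (fun x => x) A = A := by
  rw [herFun_eq hA]
  exact (hA.spectral_theorem).symm

lemma mpow_isHermitian (hA : A.IsHermitian) (r : ℝ) : (mpow A r).IsHermitian :=
  herFun_isHermitian hA _

lemma mpow_add (hA : A.PosDef) (r s : ℝ) : mpow A r * mpow A s = mpow A (r + s) := by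
  unfold mpow
  rw [herFun_mul hA.1]
  exact herFun_congr hA.1 fun i => (Real.rpow_add (hA.eigenvalues_pos i) r s).symm

lemma mpow_zero (hA : A.IsHermitian) : mpow A 0 = 1 := by
  unfold mpow
  rw [herFun_congr hA (g := fun _ => (1:ℝ)) (fun i => Real.rpow_zero _), herFun_one hA]

lemma mpow_one' (hA : A.IsHermitian) : mpow A 1 = A := by
  unfold mpow
  rw [herFun_congr hA (g := fun x => x) (fun i => Real.rpow_one _), herFun_id hA]

end Stmt13Aux


section Stmt13Aux2

open Matrix

variable {n : ℕ}

lemma posdef_conj {B S Si : Matrix (Fin n) (Fin n) ℂ} (hB : B.PosDef) (hS : Sᴴ = S)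
    (hinv : Si * S = 1) : (S * B * S).PosDef := by
  have hB' : Bᴴ = B := hB.1
  refine Matrix.PosDef.of_dotProduct_mulVec_pos ?_ ?_
  · show _ᴴ = _
    rw [← Matrix.star_eq_conjTranspose]
    simp only [StarMul.star_mul, Matrix.star_eq_conjTranspose, hS, hB', Matrix.mul_assoc]
  · intro x hx
    have hy : S *ᵥ x ≠ 0 := by
      intro h0
      apply hx
      have h1 : Si *ᵥ (S *ᵥ x) = Si *ᵥ 0 := by rw [h0]
      rwa [Matrix.mulVec_mulVec, hinv, Matrix.one_mulVec, Matrix.mulVec_zero] at h1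
    have key : dotProduct (star x) ((S * B * S) *ᵥ x)
        = dotProduct (star (S *ᵥ x)) (B *ᵥ (S *ᵥ x)) := by
      have e1 : (S * B * S) *ᵥ x = S *ᵥ (B *ᵥ (S *ᵥ x)) := by
        rw [Matrix.mulVec_mulVec, Matrix.mulVec_mulVec]
      rw [e1, Matrix.dotProduct_mulVec]
      congr 1
      rw [Matrix.star_mulVec, hS]
    rw [key]
    exact hB.dotProduct_mulVec_pos hy

lemma trace_re_DHD_nonneg (D : Matrix (Fin n) (Fin n) ℂ) : 0 ≤ (Dᴴ * D).trace.re := by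
  have e : (Dᴴ * D).trace = ∑ j, ∑ i, (starRingEnd ℂ) (D i j) * D i j := by
    simp [Matrix.trace, Matrix.diag, Matrix.mul_apply, Matrix.conjTranspose_apply]
  rw [e, Complex.re_sum]
  refine Finset.sum_nonneg fun j _ => ?_
  rw [Complex.re_sum]
  refine Finset.sum_nonneg fun i _ => ?_
  rw [mul_comm, Complex.mul_conj, Complex.ofReal_re]
  exact Complex.normSq_nonneg _

lemma ineqA (X Y : Matrix (Fin n) (Fin n) ℂ) :
    (X * Y).trace.re ≤ ((X * Xᴴ).trace.re + (Yᴴ * Y).trace.re) / 2 := by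
  have h0 := trace_re_DHD_nonneg (Xᴴ - Y)
  have e : (Xᴴ - Y)ᴴ * (Xᴴ - Y) = X * Xᴴ - X * Y - Yᴴ * Xᴴ + Yᴴ * Y := by
    rw [Matrix.conjTranspose_sub, Matrix.conjTranspose_conjTranspose]
    rw [Matrix.sub_mul, Matrix.mul_sub, Matrix.mul_sub]
    abel
  rw [e] at h0
  have e2 : (X * Xᴴ - X * Y - Yᴴ * Xᴴ + Yᴴ * Y).trace
      = (X * Xᴴ).trace - (X * Y).trace - (Yᴴ * Xᴴ).trace + (Yᴴ * Y).trace := by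
    rw [Matrix.trace_add, Matrix.trace_sub, Matrix.trace_sub]
  have e3 : (Yᴴ * Xᴴ).trace = star ((X * Y).trace) := by
    rw [← Matrix.conjTranspose_mul, Matrix.trace_conjTranspose]
  rw [e2, e3] at h0
  have e4 : ((X * Xᴴ).trace - (X * Y).trace - star ((X * Y).trace) + (Yᴴ * Y).trace).re
      = (X * Xᴴ).trace.re - (X * Y).trace.re - (X * Y).trace.re + (Yᴴ * Y).trace.re := by
    simp [Complex.sub_re, Complex.add_re, Complex.star_def, Complex.conj_re]
  rw [e4] at h0
  linarith

end Stmt13Aux2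


section Stmt13Main

open Matrix

theorem stmt13' {n : ℕ} (A B : Matrix (Fin n) (Fin n) ℂ) (hA : A.PosDef) (hB : B.PosDef) :
    (gm A B (1 / 2)).trace ≤ (mpow A (1 / 2) * mpow B (1 / 2)).trace := by
  classical
  have hAh : A.IsHermitian := hA.1
  have hBh : B.IsHermitian := hB.1
  show (mpow A (1/2) * mpow (mpow A (-(1/2)) * B * mpow A (-(1/2))) (1/2) * mpow A (1/2)).trace
      ≤ (mpow A (1/2) * mpow B (1/2)).trace
  set S : Matrix (Fin n) (Fin n) ℂ := mpow A (1/2) with hSdef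
  set Si : Matrix (Fin n) (Fin n) ℂ := mpow A (-(1/2)) with hSidef
  set T : Matrix (Fin n) (Fin n) ℂ := mpow B (1/2) with hTdef
  set Ti : Matrix (Fin n) (Fin n) ℂ := mpow B (-(1/2)) with hTidef
  set S2 : Matrix (Fin n) (Fin n) ℂ := mpow A (1/4) with hS2def
  set T2 : Matrix (Fin n) (Fin n) ℂ := mpow B (1/4) with hT2def
  set C : Matrix (Fin n) (Fin n) ℂ := Si * B * Si with hCdef
  set R : Matrix (Fin n) (Fin n) ℂ := mpow C (1/2) with hRdef
  set R4 : Matrix (Fin n) (Fin n) ℂ := mpow C (1/4) with hR4def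
  -- hermitian facts
  have hS : Sᴴ = S := mpow_isHermitian hAh _
  have hSi : Siᴴ = Si := mpow_isHermitian hAh _
  have hT : Tᴴ = T := mpow_isHermitian hBh _
  have hTi : Tiᴴ = Ti := mpow_isHermitian hBh _
  have hS2 : S2ᴴ = S2 := mpow_isHermitian hAh _
  have hT2 : T2ᴴ = T2 := mpow_isHermitian hBh _
  -- cancellation facts
  have hSSi : S * Si = 1 := by
    rw [hSdef, hSidef, mpow_add hA]; norm_num; exact mpow_zero hAh
  have hSiS : Si * S = 1 := by
    rw [hSdef, hSidef, mpow_add hA]; norm_num; exact mpow_zero hAh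
  have hTTi : T * Ti = 1 := by
    rw [hTdef, hTidef, mpow_add hB]; norm_num; exact mpow_zero hBh
  have hTiT : Ti * T = 1 := by
    rw [hTdef, hTidef, mpow_add hB]; norm_num; exact mpow_zero hBh
  have hS2S2 : S2 * S2 = S := by
    rw [hSdef, hS2def, mpow_add hA]; norm_num
  have hT2T2 : T2 * T2 = T := by
    rw [hTdef, hT2def, mpow_add hB]; norm_num
  have hTT : T * T = B := by
    rw [hTdef, mpow_add hB]; norm_num; exact mpow_one' hBh
  have hCpd : C.PosDef := posdef_conj hB hSi hSSi
  have hCh : C.IsHermitian := hCpd.1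
  have hR : Rᴴ = R := mpow_isHermitian hCh _
  have hR4 : R4ᴴ = R4 := mpow_isHermitian hCh _
  have hR4R4 : R4 * R4 = R := by
    rw [hRdef, hR4def, mpow_add hCpd]; norm_num
  have hRR : R * R = C := by
    rw [hRdef, mpow_add hCpd]; norm_num; exact mpow_one' hCh
  -- tail-cancellation rewrite rules
  have l1 : ∀ X : Matrix (Fin n) (Fin n) ℂ, S * (Si * X) = X := fun X => by
    rw [← Matrix.mul_assoc, hSSi, Matrix.one_mul]
  have l2 : ∀ X : Matrix (Fin n) (Fin n) ℂ, Si * (S * X) = X := fun X => by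
    rw [← Matrix.mul_assoc, hSiS, Matrix.one_mul]
  have l3 : ∀ X : Matrix (Fin n) (Fin n) ℂ, T * (Ti * X) = X := fun X => by
    rw [← Matrix.mul_assoc, hTTi, Matrix.one_mul]
  have l4 : ∀ X : Matrix (Fin n) (Fin n) ℂ, Ti * (T * X) = X := fun X => by
    rw [← Matrix.mul_assoc, hTiT, Matrix.one_mul]
  have l5 : ∀ X : Matrix (Fin n) (Fin n) ℂ, S2 * (S2 * X) = S * X := fun X => by
    rw [← Matrix.mul_assoc, hS2S2]
  have l6 : ∀ X : Matrix (Fin n) (Fin n) ℂ, T2 * (T2 * X) = T * X := fun X => by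
    rw [← Matrix.mul_assoc, hT2T2]
  have l7 : ∀ X : Matrix (Fin n) (Fin n) ℂ, R4 * (R4 * X) = R * X := fun X => by
    rw [← Matrix.mul_assoc, hR4R4]
  have l8 : ∀ X : Matrix (Fin n) (Fin n) ℂ, R * (R * X) = Si * (T * (T * (Si * X))) :=
    fun X => by
      rw [← Matrix.mul_assoc, hRR, hCdef, ← hTT]
      simp only [Matrix.mul_assoc]
  -- the geometric mean and its factorization
  set G : Matrix (Fin n) (Fin n) ℂ := S * R * S with hGdef
  have hGh : Gᴴ = G := by
    rw [hGdef]
    simp only [Matrix.conjTranspose_mul, hS, hR, Matrix.mul_assoc]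
  set V : Matrix (Fin n) (Fin n) ℂ := Si * G * Ti with hVdef
  have hSVT : S * (V * T) = G := by
    rw [hVdef]
    simp only [Matrix.mul_assoc, hTiT, Matrix.mul_one, l1]
  have hVH : Vᴴ = Ti * (G * Si) := by
    rw [hVdef]
    simp only [Matrix.conjTranspose_mul, hTi, hSi, hGh, Matrix.mul_assoc]
  have hVV : Vᴴ * V = 1 := by
    rw [hVH, hVdef, hGdef]
    simp only [Matrix.mul_assoc, l1, l2, l3, l4, l8, hSiS, hSSi, hTiT, hTTi,
      Matrix.mul_one, Matrix.one_mul]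
  have hWW : (R4 * S)ᴴ * (R4 * S) = G := by
    rw [hGdef]
    simp only [Matrix.conjTranspose_mul, hR4, hS, Matrix.mul_assoc, l7]
  -- Step 1 : r ≤ t
  have e1 : Vᴴ * (S * (V * T)) = Vᴴ * G := by rw [hSVT]
  have e2 : (Vᴴ * G).trace = ((R4 * S) * Vᴴ * (R4 * S)ᴴ).trace := by
    rw [← hWW, ← Matrix.mul_assoc, Matrix.trace_mul_comm]
    simp only [Matrix.mul_assoc]
  have e3 : ((R4 * S) * Vᴴ * ((R4 * S) * Vᴴ)ᴴ).trace = ((R4 * S) * (R4 * S)ᴴ).trace := by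
    have g1 : ((R4 * S) * Vᴴ)ᴴ = V * (R4 * S)ᴴ := by
      rw [Matrix.conjTranspose_mul, Matrix.conjTranspose_conjTranspose]
    rw [g1]
    simp only [Matrix.mul_assoc]
    rw [← Matrix.mul_assoc Vᴴ V, hVV, Matrix.one_mul]
  have e4 : ((R4 * S) * (R4 * S)ᴴ).trace = G.trace := by
    rw [Matrix.trace_mul_comm, hWW]
  have step1 : (Vᴴ * (S * (V * T))).trace.re ≤ G.trace.re := by
    have h := ineqA ((R4 * S) * Vᴴ) ((R4 * S)ᴴ)
    rw [Matrix.conjTranspose_conjTranspose] at h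
    rw [e3, e4] at h
    rw [e1, e2]
    linarith
  -- Step 2 : t ≤ (s + r)/2
  have step2 : G.trace.re
      ≤ ((S * T).trace.re + (Vᴴ * (S * (V * T))).trace.re) / 2 := by
    have f1 : (T2 * S2) * (S2 * (V * T2)) = T2 * (S * (V * T2)) := by
      simp only [Matrix.mul_assoc, l5]
    have f2 : ((T2 * S2) * (S2 * (V * T2))).trace = G.trace := by
      rw [f1, Matrix.trace_mul_comm]
      simp only [Matrix.mul_assoc]
      rw [hT2T2, hSVT]
    have f3 : ((T2 * S2) * (T2 * S2)ᴴ).trace = (S * T).trace := by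
      rw [Matrix.conjTranspose_mul, hT2, hS2]
      have g0 : T2 * S2 * (S2 * T2) = T2 * (S * T2) := by simp only [Matrix.mul_assoc, l5]
      rw [g0, Matrix.trace_mul_comm]
      simp only [Matrix.mul_assoc]
      rw [hT2T2]
    have f4 : ((S2 * (V * T2))ᴴ * (S2 * (V * T2))).trace
        = (Vᴴ * (S * (V * T))).trace := by
      have y1 : (S2 * (V * T2))ᴴ * (S2 * (V * T2)) = T2 * (Vᴴ * (S * (V * T2))) := by
        simp only [Matrix.conjTranspose_mul, hT2, hS2, Matrix.mul_assoc, l5]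
      rw [y1, Matrix.trace_mul_comm]
      simp only [Matrix.mul_assoc]
      rw [hT2T2]
    have h := ineqA (T2 * S2) (S2 * (V * T2))
    rw [f2, f3, f4] at h
    exact h
  have tle : G.trace.re ≤ (S * T).trace.re := by linarith
  -- conclude in the complex order
  rw [Complex.le_def]
  constructor
  · exact tle
  · have imG : G.trace.im = 0 := by
      have h1 : (Gᴴ).trace = star G.trace := Matrix.trace_conjTranspose G
      rw [hGh] at h1
      have h2 := congrArg Complex.im h1
      rw [Complex.star_def, Complex.conj_im] at h2
      linarith
    have imST : (S * T).trace.im = 0 := by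
      have h1 : ((S * T)ᴴ).trace = star (S * T).trace := Matrix.trace_conjTranspose _
      have e : (S * T)ᴴ = T * S := by rw [Matrix.conjTranspose_mul, hT, hS]
      rw [e, Matrix.trace_mul_comm] at h1
      have h2 := congrArg Complex.im h1
      rw [Complex.star_def, Complex.conj_im] at h2
      linarith
    rw [imG, imST]

end Stmt13Main


/-- for positive definite `A, B`, `tr(A #_{1/2} B) ≤ tr(A^{1/2} B^{1/2})`. -/
theorem stmt13 {n : ℕ} (A B : Matrix (Fin n) (Fin n) ℂ) (hA : A.PosDef) (hB : B.PosDef) :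
    (gm A B (1 / 2)).trace ≤ (mpow A (1 / 2) * mpow B (1 / 2)).trace :=
  stmt13' A B hA hB
end

section
/- Let A and B be n×n complex positive definite matrices, let X be an n×n Hermitian matrix such that the 2n×2n block matrix [[A, X],[X, B]] is positive semidefinite, and let |||·||| be a unitarily invariant norm on n×n complex matrices. Then |||X||| ≤ |||A #_{1/2} B|||. -/
open scoped BigOperators ComplexOrder

/-! ### Auxiliary functional-calculus toolkit -/

section Aux

open Matrix

variable {n : ℕ} {A : Matrix (Fin n) (Fin n) ℂ}

/-- Complex functional calculus of a Hermitian matrix. -/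
noncomputable def cFun (hA : A.IsHermitian) (f : ℝ → ℂ) : Matrix (Fin n) (Fin n) ℂ :=
  (hA.eigenvectorUnitary : Matrix (Fin n) (Fin n) ℂ) *
    Matrix.diagonal (fun i => f (hA.eigenvalues i)) *
    (star hA.eigenvectorUnitary : Matrix (Fin n) (Fin n) ℂ)

lemma herFun_eq_s17 (hA : A.IsHermitian) (f : ℝ → ℝ) :
    herFun f A = cFun hA (fun x => (f x : ℂ)) := by
  rw [herFun, dif_pos hA]; rfl

lemma cFun_congr (hA : A.IsHermitian) {f g : ℝ → ℂ}
    (h : ∀ i, f (hA.eigenvalues i) = g (hA.eigenvalues i)) : cFun hA f = cFun hA g := by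
  unfold cFun; congr 2; exact Matrix.diagonal_eq_diagonal_iff.mpr fun i => h i

lemma cFun_mul (hA : A.IsHermitian) (f g : ℝ → ℂ) :
    cFun hA f * cFun hA g = cFun hA (fun x => f x * g x) := by
  unfold cFun
  have h1 : (star hA.eigenvectorUnitary : Matrix (Fin n) (Fin n) ℂ) *
      (hA.eigenvectorUnitary : Matrix (Fin n) (Fin n) ℂ) = 1 :=
    Matrix.mem_unitaryGroup_iff'.mp hA.eigenvectorUnitary.2
  simp only [Matrix.mul_assoc]
  rw [← Matrix.mul_assoc (star hA.eigenvectorUnitary : Matrix (Fin n) (Fin n) ℂ), h1,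
    Matrix.one_mul, ← Matrix.mul_assoc (Matrix.diagonal _), Matrix.diagonal_mul_diagonal]

lemma cFun_one (hA : A.IsHermitian) : cFun hA (fun _ => (1:ℂ)) = 1 := by
  unfold cFun
  rw [Matrix.diagonal_one, Matrix.mul_one, Matrix.mem_unitaryGroup_iff.mp hA.eigenvectorUnitary.2]

lemma cFun_id (hA : A.IsHermitian) : cFun hA (fun x => (x:ℂ)) = A := by
  conv_rhs => rw [hA.spectral_theorem]
  rfl

lemma cFun_add (hA : A.IsHermitian) (f g : ℝ → ℂ) :
    cFun hA f + cFun hA g = cFun hA (fun x => f x + g x) := by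
  unfold cFun
  rw [← Matrix.add_mul, ← Matrix.mul_add, Matrix.diagonal_add]

lemma cFun_sub (hA : A.IsHermitian) (f g : ℝ → ℂ) :
    cFun hA f - cFun hA g = cFun hA (fun x => f x - g x) := by
  unfold cFun
  rw [← Matrix.sub_mul, ← Matrix.mul_sub, Matrix.diagonal_sub]

lemma cFun_conjTranspose (hA : A.IsHermitian) (f : ℝ → ℂ) :
    (cFun hA f)ᴴ = cFun hA (fun x => (starRingEnd ℂ) (f x)) := by
  unfold cFun
  rw [Matrix.conjTranspose_mul, Matrix.conjTranspose_mul, Matrix.diagonal_conjTranspose]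
  rw [← Matrix.star_eq_conjTranspose, ← Matrix.star_eq_conjTranspose, star_star,
    Matrix.mul_assoc]
  rfl

lemma cFun_isHermitian (hA : A.IsHermitian) {f : ℝ → ℂ}
    (h : ∀ i, (starRingEnd ℂ) (f (hA.eigenvalues i)) = f (hA.eigenvalues i)) :
    (cFun hA f).IsHermitian := by
  show _ = _
  rw [cFun_conjTranspose]
  exact cFun_congr hA h

lemma cFun_posSemidef (hA : A.IsHermitian) {f : ℝ → ℂ}
    (h : ∀ i, 0 ≤ f (hA.eigenvalues i)) : (cFun hA f).PosSemidef := by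
  unfold cFun
  have hd : (Matrix.diagonal (fun i => f (hA.eigenvalues i))).PosSemidef :=
    Matrix.posSemidef_diagonal_iff.mpr h
  have := hd.mul_mul_conjTranspose_same (hA.eigenvectorUnitary : Matrix (Fin n) (Fin n) ℂ)
  rwa [← Matrix.star_eq_conjTranspose] at this

/-- conjugation of PosDef by an invertible matrix -/
lemma posDef_conj {M B : Matrix (Fin n) (Fin n) ℂ} (hM : M.PosDef) (hB : IsUnit B) :
    (Bᴴ * M * B).PosDef := by
  refine Matrix.PosDef.of_dotProduct_mulVec_pos (Matrix.isHermitian_conjTranspose_mul_mul B hM.1) fun x hx => ?_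
  have hinj : Function.Injective (B.mulVec) := (Matrix.mulVec_injective_iff_isUnit).mpr hB
  have hBx : B *ᵥ x ≠ 0 := fun h => hx (hinj (by simpa using h))
  simpa only [star_mulVec, dotProduct_mulVec, vecMul_vecMul] using hM.dotProduct_mulVec_pos hBx

lemma posDef_conj' {M B : Matrix (Fin n) (Fin n) ℂ} (hM : M.PosDef) (hB : IsUnit B) :
    (B * M * Bᴴ).PosDef := by
  have hB' : IsUnit Bᴴ := (Matrix.isUnit_iff_isUnit_det _).mpr
    (by rw [Matrix.det_conjTranspose]; exact hB.map (Matrix.detMonoidHom) |>.star)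
  simpa using posDef_conj hM hB'

lemma cFun_posDef (hA : A.IsHermitian) {f : ℝ → ℂ}
    (h : ∀ i, 0 < f (hA.eigenvalues i)) : (cFun hA f).PosDef := by
  unfold cFun
  have hd : (Matrix.diagonal (fun i => f (hA.eigenvalues i))).PosDef :=
    Matrix.posDef_diagonal_iff.mpr h
  have hU : IsUnit (hA.eigenvectorUnitary : Matrix (Fin n) (Fin n) ℂ) :=
    ⟨⟨(hA.eigenvectorUnitary : Matrix (Fin n) (Fin n) ℂ),
      (star hA.eigenvectorUnitary : Matrix (Fin n) (Fin n) ℂ),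
      Matrix.mem_unitaryGroup_iff.mp hA.eigenvectorUnitary.2,
      Matrix.mem_unitaryGroup_iff'.mp hA.eigenvectorUnitary.2⟩, rfl⟩
  have := posDef_conj' hd hU
  rwa [← Matrix.star_eq_conjTranspose] at this

lemma eig_smul {C : Matrix (Fin n) (Fin n) ℂ} (hC : C.IsHermitian) (i : Fin n) :
    C *ᵥ ⇑(hC.eigenvectorBasis i) = ((hC.eigenvalues i : ℂ)) • ⇑(hC.eigenvectorBasis i) := by
  rw [hC.mulVec_eigenvectorBasis i]
  funext j
  simp [Complex.real_smul]

lemma eig_ne_zero {C : Matrix (Fin n) (Fin n) ℂ} (hC : C.IsHermitian) (i : Fin n) :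
    (⇑(hC.eigenvectorBasis i) : Fin n → ℂ) ≠ 0 :=
  fun h => hC.eigenvectorBasis.orthonormal.ne_zero i (by ext j; exact congrFun h j)

/-- Operator monotonicity of the square root, in the form needed below. -/
lemma sqrt_mono {P Q : Matrix (Fin n) (Fin n) ℂ} (hP : P.PosSemidef) (hQ : Q.PosDef)
    (h : (Q*Q - P*P).PosSemidef) : (Q - P).PosSemidef := by
  have hH : (Q - P).IsHermitian := hQ.1.sub hP.1
  apply hH.posSemidef_iff_eigenvalues_nonneg.mpr
  intro i
  by_contra hneg
  push_neg at hneg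
  rw [Pi.zero_apply] at hneg
  set μ := hH.eigenvalues i with hμ
  set v : Fin n → ℂ := ⇑(hH.eigenvectorBasis i) with hv_def
  have hv0 : v ≠ 0 := eig_ne_zero hH i
  have hv : (Q - P) *ᵥ v = (μ:ℂ) • v := eig_smul hH i
  have hv' : (P - Q) *ᵥ v = ((-μ : ℝ):ℂ) • v := by
    rw [← neg_sub Q P, Matrix.neg_mulVec, hv]
    push_cast
    rw [neg_smul]
  have hherm : (P - Q).IsHermitian := hP.1.sub hQ.1
  set qP := dotProduct (star v) (P *ᵥ v) with hqPdef
  set qQ := dotProduct (star v) (Q *ᵥ v) with hqQdef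
  have h1 : dotProduct (star v) ((P*(P-Q)) *ᵥ v) = ((-μ:ℝ):ℂ) * qP := by
    rw [← Matrix.mulVec_mulVec, hv', Matrix.mulVec_smul, dotProduct_smul, smul_eq_mul]
  have h2 : dotProduct (star v) (((P-Q)*Q) *ᵥ v) = ((-μ:ℝ):ℂ) * qQ := by
    rw [← Matrix.mulVec_mulVec, Matrix.dotProduct_mulVec]
    have hrow : star v ᵥ* (P - Q) = star (((-μ:ℝ):ℂ) • v) := by
      conv_lhs => rw [← hherm.eq]
      rw [← Matrix.star_mulVec, hv']
    rw [hrow, star_smul, smul_dotProduct, smul_eq_mul]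
    simp [Complex.conj_ofReal, hqQdef]
  have hdecomp : P*P - Q*Q = P*(P-Q) + (P-Q)*Q := by noncomm_ring
  have hsum : dotProduct (star v) ((P*P - Q*Q) *ᵥ v) = ((-μ:ℝ):ℂ) * (qP + qQ) := by
    rw [hdecomp, Matrix.add_mulVec, dotProduct_add, h1, h2]
    ring
  have hqf := h.dotProduct_mulVec_nonneg v
  have hflip : (Q*Q - P*P) = -(P*P - Q*Q) := (neg_sub _ _).symm
  rw [hflip, Matrix.neg_mulVec, dotProduct_neg, hsum] at hqf
  have hqP : 0 ≤ qP := hP.dotProduct_mulVec_nonneg v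
  have hqQ : 0 < qQ := hQ.dotProduct_mulVec_pos hv0
  rw [Complex.nonneg_iff] at hqf hqP
  rw [Complex.pos_iff] at hqQ
  have hre : (-(((-μ:ℝ):ℂ) * (qP + qQ))).re = μ * (qP.re + qQ.re) := by
    simp; try ring
  rw [hre] at hqf
  nlinarith [hqf.1, hqP.1, hqQ.1]

/-- Eigenvalues of a Hermitian matrix `C` with `1 - C ⪰ 0` are at most 1. -/
lemma eig_le_one {C : Matrix (Fin n) (Fin n) ℂ} (hC : C.IsHermitian)
    (h1 : ((1:Matrix (Fin n) (Fin n) ℂ) - C).PosSemidef) (i : Fin n) :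
    hC.eigenvalues i ≤ 1 := by
  set μ := hC.eigenvalues i with hμ
  set v : Fin n → ℂ := ⇑(hC.eigenvectorBasis i) with hv_def
  have hv0 : v ≠ 0 := eig_ne_zero hC i
  have hv : C *ᵥ v = (μ:ℂ) • v := eig_smul hC i
  have hqf := h1.dotProduct_mulVec_nonneg v
  have hmv : ((1:Matrix (Fin n) (Fin n) ℂ) - C) *ᵥ v = ((1 - μ:ℝ):ℂ) • v := by
    rw [Matrix.sub_mulVec, Matrix.one_mulVec, hv]
    push_cast
    rw [sub_smul, one_smul]
  rw [hmv, dotProduct_smul] at hqf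
  set r := dotProduct (star v) v with hr
  have hrpos : 0 < r := Matrix.dotProduct_star_self_pos_iff.mpr hv0
  rw [Complex.pos_iff] at hrpos
  rw [smul_eq_mul, Complex.nonneg_iff] at hqf
  have : (((1 - μ:ℝ):ℂ) * r).re = (1 - μ) * r.re := by
    simp [← hrpos.2]
  rw [this] at hqf
  nlinarith [hqf.1, hrpos.1]

/-- Positive real scalar multiples of positive definite matrices. -/
lemma posDef_smul {T : Matrix (Fin n) (Fin n) ℂ} (hT : T.PosDef) {ε : ℝ} (hε : 0 < ε) :
    (((ε:ℂ)) • T).PosDef := by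
  refine Matrix.PosDef.of_dotProduct_mulVec_pos ?_ ?_
  · show _ = _
    rw [Matrix.conjTranspose_smul, hT.1.eq]
    congr 1
    simp [Complex.conj_ofReal]
  · intro x hx
    rw [Matrix.smul_mulVec, dotProduct_smul, smul_eq_mul]
    have h := hT.dotProduct_mulVec_pos hx
    rw [Complex.pos_iff] at h ⊢
    constructor
    · simp only [Complex.mul_re, Complex.ofReal_re, Complex.ofReal_im, zero_mul, sub_zero]
      exact mul_pos hε h.1
    · simp only [Complex.mul_im, Complex.ofReal_re, Complex.ofReal_im, zero_mul, add_zero]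
      rw [← h.2]; ring

end Aux

section NormAux

open Matrix

variable {n : ℕ}

lemma N_zero (NN : UnitarilyInvariantNorm n) : NN.N 0 = 0 := by
  have := NN.smul_eq 0 0
  simpa using this

lemma N_neg (NN : UnitarilyInvariantNorm n) (X : Matrix (Fin n) (Fin n) ℂ) :
    NN.N (-X) = NN.N X := by
  have := NN.smul_eq (-1) X
  simpa using this

lemma N_nonneg (NN : UnitarilyInvariantNorm n) (X : Matrix (Fin n) (Fin n) ℂ) :
    0 ≤ NN.N X := by
  have h := NN.add_le X (-X)
  rw [add_neg_cancel, N_zero, N_neg] at h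
  linarith

lemma N_unitary_conj (NN : UnitarilyInvariantNorm n) {W : Matrix (Fin n) (Fin n) ℂ}
    (X : Matrix (Fin n) (Fin n) ℂ)
    (hW : star W * W = 1) : NN.N (W * X * star W) = NN.N X := by
  have hW2 : W * star W = 1 := mul_eq_one_comm.mp hW
  have hmem : W ∈ Matrix.unitaryGroup (Fin n) ℂ := Matrix.mem_unitaryGroup_iff.mpr hW2
  have hmem' : star W ∈ Matrix.unitaryGroup (Fin n) ℂ :=
    Matrix.mem_unitaryGroup_iff.mpr (by rw [star_star]; exact hW)
  exact NN.invariant ⟨W, hmem⟩ ⟨star W, hmem'⟩ X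

lemma N_unitary_conj' (NN : UnitarilyInvariantNorm n) {W : Matrix (Fin n) (Fin n) ℂ}
    (X : Matrix (Fin n) (Fin n) ℂ)
    (hW : star W * W = 1) : NN.N (W * X * W) = NN.N X := by
  have hW2 : W * star W = 1 := mul_eq_one_comm.mp hW
  have hmem : W ∈ Matrix.unitaryGroup (Fin n) ℂ := Matrix.mem_unitaryGroup_iff.mpr hW2
  exact NN.invariant ⟨W, hmem⟩ ⟨W, hmem⟩ X

lemma N_unitary_left (NN : UnitarilyInvariantNorm n) {W : Matrix (Fin n) (Fin n) ℂ}
    (X : Matrix (Fin n) (Fin n) ℂ)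
    (hW : star W * W = 1) : NN.N (W * X) = NN.N X := by
  have hW2 : W * star W = 1 := mul_eq_one_comm.mp hW
  have hmem : W ∈ Matrix.unitaryGroup (Fin n) ℂ := Matrix.mem_unitaryGroup_iff.mpr hW2
  have := NN.invariant ⟨W, hmem⟩ 1 X
  simpa using this

lemma real_aux2 {e : ℝ} (he : 0 < e) : (Real.sqrt e)⁻¹ * e * (Real.sqrt e)⁻¹ = 1 := by
  have h1 := Real.mul_self_sqrt he.le
  have h0 : Real.sqrt e ≠ 0 := ne_of_gt (Real.sqrt_pos.mpr he)
  field_simp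
  rw [Real.sq_sqrt he.le]

/-- Square-root package of a positive definite matrix. -/
lemma posDef_sqrt_package {M : Matrix (Fin n) (Fin n) ℂ} (hM : M.PosDef) :
    ∃ R Ri : Matrix (Fin n) (Fin n) ℂ, R.IsHermitian ∧ Ri.IsHermitian ∧ R.PosDef ∧
      R * Ri = 1 ∧ Ri * R = 1 ∧ R * R = M ∧ Ri * M * Ri = 1 := by
  have hMH := hM.1
  have hpos : ∀ i, 0 < hMH.eigenvalues i := hM.eigenvalues_pos
  refine ⟨cFun hMH (fun x => (Real.sqrt x : ℂ)), cFun hMH (fun x => (((Real.sqrt x)⁻¹ : ℝ) : ℂ)),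
    cFun_isHermitian hMH fun i => Complex.conj_ofReal _,
    cFun_isHermitian hMH fun i => Complex.conj_ofReal _,
    cFun_posDef hMH fun i => by
      rw [Complex.zero_lt_real]; exact Real.sqrt_pos.mpr (hpos i), ?_, ?_, ?_, ?_⟩
  · rw [cFun_mul]
    refine (cFun_congr hMH fun i => ?_).trans (cFun_one hMH)
    rw [← Complex.ofReal_mul,
      mul_inv_cancel₀ (ne_of_gt (Real.sqrt_pos.mpr (hpos i))), Complex.ofReal_one]
  · rw [cFun_mul]
    refine (cFun_congr hMH fun i => ?_).trans (cFun_one hMH)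
    rw [← Complex.ofReal_mul,
      inv_mul_cancel₀ (ne_of_gt (Real.sqrt_pos.mpr (hpos i))), Complex.ofReal_one]
  · rw [cFun_mul]
    refine (cFun_congr hMH fun i => ?_).trans (cFun_id hMH)
    rw [← Complex.ofReal_mul, Real.mul_self_sqrt (hpos i).le]
  · have h2 : cFun hMH (fun x => (((Real.sqrt x)⁻¹ : ℝ) : ℂ)) * cFun hMH (fun x => (x:ℂ))
        * cFun hMH (fun x => (((Real.sqrt x)⁻¹ : ℝ) : ℂ)) = 1 := by
      rw [cFun_mul, cFun_mul]
      refine (cFun_congr hMH fun i => ?_).trans (cFun_one hMH)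
      rw [← Complex.ofReal_mul, ← Complex.ofReal_mul, real_aux2 (hpos i), Complex.ofReal_one]
    rwa [cFun_id hMH] at h2

/-- Splitting a positive definite contraction as half the sum of a unitary and its adjoint. -/
lemma contraction_package {C : Matrix (Fin n) (Fin n) ℂ} (hC : C.PosDef)
    (h1C : ((1:Matrix (Fin n) (Fin n) ℂ) - C).PosSemidef) :
    ∃ D U : Matrix (Fin n) (Fin n) ℂ, D.IsHermitian ∧ IsUnit D ∧ D * D = C ∧
      star U * U = 1 ∧ U + star U = D + D := by
  have hCH := hC.1
  have hpos : ∀ i, 0 < hCH.eigenvalues i := hC.eigenvalues_pos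
  have hle1 : ∀ i, hCH.eigenvalues i ≤ 1 := fun i => eig_le_one hCH h1C i
  set D := cFun hCH (fun x => (Real.sqrt x : ℂ)) with hDdef
  set Di := cFun hCH (fun x => (((Real.sqrt x)⁻¹ : ℝ) : ℂ)) with hDidef
  set U := cFun hCH (fun x => (Real.sqrt x : ℂ) + Complex.I * (Real.sqrt (1 - x) : ℂ)) with hUdef
  have hDDi : D * Di = 1 := by
    rw [hDdef, hDidef, cFun_mul]
    refine (cFun_congr hCH fun i => ?_).trans (cFun_one hCH)
    rw [← Complex.ofReal_mul,
      mul_inv_cancel₀ (ne_of_gt (Real.sqrt_pos.mpr (hpos i))), Complex.ofReal_one]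
  have hDiD : Di * D = 1 := by
    rw [hDdef, hDidef, cFun_mul]
    refine (cFun_congr hCH fun i => ?_).trans (cFun_one hCH)
    rw [← Complex.ofReal_mul,
      inv_mul_cancel₀ (ne_of_gt (Real.sqrt_pos.mpr (hpos i))), Complex.ofReal_one]
  have hUstar : star U
      = cFun hCH (fun x => (Real.sqrt x : ℂ) - Complex.I * (Real.sqrt (1 - x) : ℂ)) := by
    rw [hUdef, Matrix.star_eq_conjTranspose, cFun_conjTranspose]
    refine cFun_congr hCH fun i => ?_
    simp [Complex.conj_ofReal]
    ring
  refine ⟨D, U, cFun_isHermitian hCH fun i => Complex.conj_ofReal _,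
    ⟨⟨D, Di, hDDi, hDiD⟩, rfl⟩, ?_, ?_, ?_⟩
  · rw [hDdef, cFun_mul]
    refine (cFun_congr hCH fun i => ?_).trans (cFun_id hCH)
    rw [← Complex.ofReal_mul, Real.mul_self_sqrt (hpos i).le]
  · rw [hUstar, hUdef, cFun_mul]
    refine (cFun_congr hCH fun i => ?_).trans (cFun_one hCH)
    have ha : (Real.sqrt (hCH.eigenvalues i) : ℂ) * (Real.sqrt (hCH.eigenvalues i) : ℂ)
        = ((hCH.eigenvalues i : ℝ) : ℂ) := by
      rw [← Complex.ofReal_mul, Real.mul_self_sqrt (hpos i).le]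
    have hb : (Real.sqrt (1 - hCH.eigenvalues i) : ℂ) * (Real.sqrt (1 - hCH.eigenvalues i) : ℂ)
        = 1 - ((hCH.eigenvalues i : ℝ) : ℂ) := by
      rw [← Complex.ofReal_mul, Real.mul_self_sqrt (by linarith [hle1 i])]
      push_cast
      ring
    calc ((Real.sqrt (hCH.eigenvalues i) : ℂ)
            - Complex.I * (Real.sqrt (1 - hCH.eigenvalues i) : ℂ))
          * ((Real.sqrt (hCH.eigenvalues i) : ℂ)
            + Complex.I * (Real.sqrt (1 - hCH.eigenvalues i) : ℂ))
        = (Real.sqrt (hCH.eigenvalues i) : ℂ) * (Real.sqrt (hCH.eigenvalues i) : ℂ)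
          - (Complex.I * Complex.I) * ((Real.sqrt (1 - hCH.eigenvalues i) : ℂ)
            * (Real.sqrt (1 - hCH.eigenvalues i) : ℂ)) := by ring
      _ = 1 := by rw [ha, Complex.I_mul_I, hb]; ring
  · rw [hUstar, hUdef, hDdef, cFun_add, cFun_add]
    refine cFun_congr hCH fun i => ?_
    ring

/-- Monotonicity of a unitarily invariant norm on positive definite matrices. -/
lemma N_mono_posDef (NN : UnitarilyInvariantNorm n) {S T : Matrix (Fin n) (Fin n) ℂ}
    (hS : S.PosDef) (hT : T.PosDef) (hST : (T - S).PosSemidef) : NN.N S ≤ NN.N T := by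
  obtain ⟨Tr, Ti, hTrH, hTiH, hTrPD, hTrTi, hTiTr, hTrsq, hTiTTi⟩ := posDef_sqrt_package hT
  have hTiUnit : IsUnit Ti := ⟨⟨Ti, Tr, hTiTr, hTrTi⟩, rfl⟩
  have hCpd : (Ti * S * Ti).PosDef := by
    have := posDef_conj hS hTiUnit
    rwa [hTiH.eq] at this
  have h1C : ((1:Matrix (Fin n) (Fin n) ℂ) - Ti * S * Ti).PosSemidef := by
    have hh := hST.conjTranspose_mul_mul_same Ti
    rw [hTiH.eq] at hh
    have heq : Ti * (T - S) * Ti = 1 - Ti * S * Ti := by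
      rw [Matrix.mul_sub, Matrix.sub_mul, hTiTTi]
    rwa [heq] at hh
  obtain ⟨D, U, hDH, hDUnit, hDD, hUU, hUD⟩ := contraction_package hCpd h1C
  have hS_eq : S = (Tr * D) * (D * Tr) := by
    have hTCT : Tr * (Ti * S * Ti) * Tr = S := by
      calc Tr * (Ti * S * Ti) * Tr = (Tr * Ti) * S * (Ti * Tr) := by
            simp only [Matrix.mul_assoc]
        _ = S := by rw [hTrTi, hTiTr, Matrix.one_mul, Matrix.mul_one]
    calc S = Tr * (Ti * S * Ti) * Tr := hTCT.symm
      _ = Tr * (D * D) * Tr := by rw [hDD]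
      _ = (Tr * D) * (D * Tr) := by simp only [Matrix.mul_assoc]
  have hGpd : (D * T * D).PosDef := by
    have := posDef_conj hT hDUnit
    rwa [hDH.eq] at this
  obtain ⟨Pr, Pi, hPrH, hPiH, hPrPD, hPrPi, hPiPr, hPrsq, hPiGPi⟩ := posDef_sqrt_package hGpd
  have hMH : (Tr * D)ᴴ = D * Tr := by
    rw [Matrix.conjTranspose_mul, hDH.eq, hTrH.eq]
  have hW'W : star (Tr * D * Pi) * (Tr * D * Pi) = 1 := by
    have hst : star (Tr * D * Pi) = Pi * (D * Tr) := by
      rw [Matrix.star_eq_conjTranspose, Matrix.conjTranspose_mul, hMH, hPiH.eq]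
    rw [hst]
    calc Pi * (D * Tr) * (Tr * D * Pi) = Pi * (D * (Tr * Tr) * D) * Pi := by
          simp only [Matrix.mul_assoc]
      _ = Pi * (D * T * D) * Pi := by rw [hTrsq]
      _ = 1 := hPiGPi
  have hSW : S = (Tr * D * Pi) * (D * T * D) * star (Tr * D * Pi) := by
    have hst : star (Tr * D * Pi) = Pi * (D * Tr) := by
      rw [Matrix.star_eq_conjTranspose, Matrix.conjTranspose_mul, hMH, hPiH.eq]
    rw [hst, ← hPrsq]
    calc S = (Tr * D) * (D * Tr) := hS_eq
      _ = (Tr * D) * (Pi * Pr) * (Pr * Pi) * (D * Tr) := by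
          rw [hPiPr, hPrPi]
          simp only [Matrix.mul_one]
      _ = Tr * D * Pi * (Pr * Pr) * (Pi * (D * Tr)) := by simp only [Matrix.mul_assoc]
  have hNS : NN.N S = NN.N (D * T * D) := by
    rw [hSW]
    exact N_unitary_conj NN _ hW'W
  -- final step : N (D*T*D) ≤ N T
  have hGsum : D * T * D + D * T * D + D * T * D + D * T * D
      = U*T*U + U*T*(star U) + (star U)*T*U + (star U)*T*(star U) := by
    calc D * T * D + D * T * D + D * T * D + D * T * D = (D + D) * T * (D + D) := by noncomm_ring
      _ = (U + star U) * T * (U + star U) := by rw [hUD]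
      _ = _ := by noncomm_ring
  have h4G : NN.N (D * T * D + D * T * D + D * T * D + D * T * D) = 4 * NN.N (D * T * D) := by
    have h4 : D * T * D + D * T * D + D * T * D + D * T * D = ((4:ℂ)) • (D * T * D) := by
      rw [show ((4:ℂ)) = 1 + 1 + 1 + 1 by norm_num]
      simp only [add_smul, one_smul]
    rw [h4, NN.smul_eq]
    norm_num
  have hstarUU : star (star U) * star U = 1 := by
    rw [star_star]; exact mul_eq_one_comm.mp hUU
  have hUTU : NN.N (U*T*U) = NN.N T := N_unitary_conj' NN T hUU
  have hUTU' : NN.N (U*T*(star U)) = NN.N T := N_unitary_conj NN T hUU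
  have hU'TU : NN.N ((star U)*T*U) = NN.N T := by
    have h2 : (star U)*T*U = (star U)*T*(star (star U)) := by rw [star_star]
    rw [h2]
    exact N_unitary_conj NN T hstarUU
  have hU'TU' : NN.N ((star U)*T*(star U)) = NN.N T := N_unitary_conj' NN T hstarUU
  have hle : NN.N (D * T * D + D * T * D + D * T * D + D * T * D) ≤ 4 * NN.N T := by
    rw [hGsum]
    have t1 := NN.add_le (U*T*U + U*T*(star U) + (star U)*T*U) ((star U)*T*(star U))
    have t2 := NN.add_le (U*T*U + U*T*(star U)) ((star U)*T*U)
    have t3 := NN.add_le (U*T*U) (U*T*(star U))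
    rw [hUTU] at t3
    rw [hUTU'] at t3
    rw [hU'TU] at t2
    rw [hU'TU'] at t1
    linarith
  rw [h4G] at hle
  linarith [hNS, hle]

end NormAux

section Final

open Matrix

variable {n : ℕ}

/-- General monotonicity of unitarily invariant norms w.r.t. the Loewner order. -/
lemma N_mono (NN : UnitarilyInvariantNorm n) {S T : Matrix (Fin n) (Fin n) ℂ}
    (hS : S.PosSemidef) (hT : T.PosDef) (hST : (T - S).PosSemidef) : NN.N S ≤ NN.N T := by
  have hkey : ∀ ε : ℝ, 0 < ε → NN.N S ≤ NN.N T + ε * (2 * NN.N T) := by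
    intro ε hε
    have hεT : (((ε:ℝ):ℂ) • T).PosDef := posDef_smul hT hε
    have hSε : (S + ((ε:ℝ):ℂ) • T).PosDef := Matrix.PosDef.posSemidef_add hS hεT
    have h1ε : ((((1+ε:ℝ)):ℂ) • T).PosDef := posDef_smul hT (by linarith)
    have hle : (((1+ε:ℝ):ℂ) • T - (S + ((ε:ℝ):ℂ) • T)).PosSemidef := by
      have heq : ((1+ε:ℝ):ℂ) • T - (S + ((ε:ℝ):ℂ) • T) = T - S := by
        push_cast
        rw [add_smul, one_smul]
        abel
      rw [heq]; exact hST
    have hmono := N_mono_posDef NN hSε h1ε hle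
    rw [NN.smul_eq] at hmono
    have hnorm1 : ‖((1+ε:ℝ):ℂ)‖ = 1 + ε := by
      rw [Complex.norm_real, Real.norm_eq_abs, abs_of_pos (by linarith)]
    rw [hnorm1] at hmono
    have hsplit : NN.N S ≤ NN.N (S + ((ε:ℝ):ℂ) • T) + ε * NN.N T := by
      have h := NN.add_le (S + ((ε:ℝ):ℂ) • T) (-(((ε:ℝ):ℂ) • T))
      rw [add_neg_cancel_right] at h
      have h2 : NN.N (-(((ε:ℝ):ℂ) • T)) = ε * NN.N T := by
        rw [N_neg, NN.smul_eq, Complex.norm_real, Real.norm_eq_abs, abs_of_pos hε]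
      linarith [h, h2.le, h2.ge]
    linarith
  by_contra hcon
  push_neg at hcon
  have hNT : 0 ≤ NN.N T := N_nonneg NN T
  have hd : (0:ℝ) < 2 * NN.N T + 1 := by linarith
  have hε : 0 < (NN.N S - NN.N T) / (2 * NN.N T + 1) := div_pos (by linarith) hd
  have h2 := hkey _ hε
  have h3 : (NN.N S - NN.N T) / (2 * NN.N T + 1) * (2 * NN.N T) < NN.N S - NN.N T := by
    rw [div_mul_eq_mul_div, div_lt_iff₀ hd]
    nlinarith
  linarith

/-- The geometric mean dominates any Hermitian `X` making the block matrix PSD. -/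
lemma gm_dominates {A B X : Matrix (Fin n) (Fin n) ℂ} (hA : A.PosDef) (hB : B.PosDef)
    (hX : X.IsHermitian) (hblock : (Matrix.fromBlocks A X X B).PosSemidef) :
    (gm A B (1/2)).PosDef ∧ ((gm A B (1/2)) - X).PosSemidef ∧
      ((gm A B (1/2)) + X).PosSemidef := by
  have hAH := hA.1
  have hApos : ∀ i, 0 < hAH.eigenvalues i := hA.eigenvalues_pos
  -- the two powers of A
  have hAr : mpow A (1/2) = cFun hAH (fun x => ((x ^ ((1:ℝ)/2) : ℝ) : ℂ)) :=
    herFun_eq_s17 hAH _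
  have hAi : mpow A (-(1/2)) = cFun hAH (fun x => ((x ^ (-((1:ℝ)/2)) : ℝ) : ℂ)) :=
    herFun_eq_s17 hAH _
  have hArH : (mpow A (1/2)).IsHermitian := by
    rw [hAr]; exact cFun_isHermitian hAH fun i => Complex.conj_ofReal _
  have hAiH : (mpow A (-(1/2))).IsHermitian := by
    rw [hAi]; exact cFun_isHermitian hAH fun i => Complex.conj_ofReal _
  have hArAi : mpow A (1/2) * mpow A (-(1/2)) = 1 := by
    rw [hAr, hAi, cFun_mul]
    refine (cFun_congr hAH fun i => ?_).trans (cFun_one hAH)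
    rw [← Complex.ofReal_mul, ← Real.rpow_add (hApos i)]
    norm_num
  have hAiAr : mpow A (-(1/2)) * mpow A (1/2) = 1 := by
    rw [hAr, hAi, cFun_mul]
    refine (cFun_congr hAH fun i => ?_).trans (cFun_one hAH)
    rw [← Complex.ofReal_mul, ← Real.rpow_add (hApos i)]
    norm_num
  have hAiUnit : IsUnit (mpow A (-(1/2))) :=
    ⟨⟨mpow A (-(1/2)), mpow A (1/2), hAiAr, hArAi⟩, rfl⟩
  have hArUnit : IsUnit (mpow A (1/2)) :=
    ⟨⟨mpow A (1/2), mpow A (-(1/2)), hArAi, hAiAr⟩, rfl⟩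
  -- A⁻¹ = Ai * Ai
  have hAinv : A⁻¹ = mpow A (-(1/2)) * mpow A (-(1/2)) := by
    apply Matrix.inv_eq_right_inv
    have h3 : cFun hAH (fun x => (x:ℂ)) *
        (cFun hAH (fun x => ((x ^ (-((1:ℝ)/2)) : ℝ) : ℂ)) *
          cFun hAH (fun x => ((x ^ (-((1:ℝ)/2)) : ℝ) : ℂ))) = 1 := by
      rw [cFun_mul, cFun_mul]
      refine (cFun_congr hAH fun i => ?_).trans (cFun_one hAH)
      rw [← Complex.ofReal_mul, ← Complex.ofReal_mul, ← Real.rpow_add (hApos i),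
        show (-((1:ℝ)/2) + -((1:ℝ)/2)) = (-1 : ℝ) by norm_num, Real.rpow_neg_one,
        mul_inv_cancel₀ (ne_of_gt (hApos i)), Complex.ofReal_one]
    rw [cFun_id hAH] at h3
    rw [hAi]
    exact h3
  -- the matrix R
  have hR : (mpow A (-(1/2)) * B * mpow A (-(1/2))).PosDef := by
    have := posDef_conj hB hAiUnit
    rwa [hAiH.eq] at this
  have hRH := hR.1
  have hRpos : ∀ i, 0 < hRH.eigenvalues i := hR.eigenvalues_pos
  have hRr : mpow (mpow A (-(1/2)) * B * mpow A (-(1/2))) (1/2)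
      = cFun hRH (fun x => ((x ^ ((1:ℝ)/2) : ℝ) : ℂ)) :=
    herFun_eq_s17 hRH _
  have hRrH : (mpow (mpow A (-(1/2)) * B * mpow A (-(1/2))) (1/2)).IsHermitian := by
    rw [hRr]; exact cFun_isHermitian hRH fun i => Complex.conj_ofReal _
  have hRrPD : (mpow (mpow A (-(1/2)) * B * mpow A (-(1/2))) (1/2)).PosDef := by
    rw [hRr]
    exact cFun_posDef hRH fun i => by
      rw [Complex.zero_lt_real]; exact Real.rpow_pos_of_pos (hRpos i) _
  have hRrsq : mpow (mpow A (-(1/2)) * B * mpow A (-(1/2))) (1/2)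
      * mpow (mpow A (-(1/2)) * B * mpow A (-(1/2))) (1/2)
      = mpow A (-(1/2)) * B * mpow A (-(1/2)) := by
    rw [hRr, cFun_mul]
    refine (cFun_congr hRH fun i => ?_).trans (cFun_id hRH)
    rw [← Complex.ofReal_mul, ← Real.rpow_add (hRpos i),
      show ((1:ℝ)/2 + (1:ℝ)/2) = (1:ℝ) by norm_num, Real.rpow_one]
  -- Schur complement
  haveI : Invertible A := hA.isUnit.invertible
  have hblock' : (Matrix.fromBlocks A X Xᴴ B).PosSemidef := by rwa [hX.eq]
  have hSch : (B - Xᴴ * A⁻¹ * X).PosSemidef :=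
    (Matrix.PosDef.fromBlocks₁₁ X B hA).mp hblock'
  rw [hX.eq] at hSch
  -- Z = Ai X Ai
  have hZH : (mpow A (-(1/2)) * X * mpow A (-(1/2))).IsHermitian := by
    have := Matrix.isHermitian_conjTranspose_mul_mul (mpow A (-(1/2))) hX
    rwa [hAiH.eq] at this
  have hZZ : (mpow A (-(1/2)) * B * mpow A (-(1/2))
      - (mpow A (-(1/2)) * X * mpow A (-(1/2)))
        * (mpow A (-(1/2)) * X * mpow A (-(1/2)))).PosSemidef := by
    have hc := hSch.conjTranspose_mul_mul_same (mpow A (-(1/2)))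
    rw [hAiH.eq] at hc
    have heq : mpow A (-(1/2)) * (B - X * A⁻¹ * X) * mpow A (-(1/2))
        = mpow A (-(1/2)) * B * mpow A (-(1/2))
          - (mpow A (-(1/2)) * X * mpow A (-(1/2)))
            * (mpow A (-(1/2)) * X * mpow A (-(1/2))) := by
      rw [hAinv]
      noncomm_ring
    rwa [heq] at hc
  -- |Z|
  have hZabPSD : (cFun hZH (fun x => ((|x| : ℝ) : ℂ))).PosSemidef :=
    cFun_posSemidef hZH fun i => by rw [Complex.zero_le_real]; exact abs_nonneg _
  have hZab2 : cFun hZH (fun x => ((|x| : ℝ) : ℂ)) * cFun hZH (fun x => ((|x| : ℝ) : ℂ))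
      = (mpow A (-(1/2)) * X * mpow A (-(1/2)))
        * (mpow A (-(1/2)) * X * mpow A (-(1/2))) := by
    have h3 : cFun hZH (fun x => ((|x| : ℝ) : ℂ)) * cFun hZH (fun x => ((|x| : ℝ) : ℂ))
        = cFun hZH (fun x => (x:ℂ)) * cFun hZH (fun x => (x:ℂ)) := by
      rw [cFun_mul, cFun_mul]
      refine cFun_congr hZH fun i => ?_
      rw [← Complex.ofReal_mul, ← Complex.ofReal_mul, abs_mul_abs_self]
    rw [h3, cFun_id hZH]
  -- sqrt monotone
  have hkey : (mpow (mpow A (-(1/2)) * B * mpow A (-(1/2))) (1/2)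
      - cFun hZH (fun x => ((|x| : ℝ) : ℂ))).PosSemidef := by
    apply sqrt_mono hZabPSD hRrPD
    rw [hRrsq, hZab2]
    exact hZZ
  -- |Z| ± Z
  have habsp : (cFun hZH (fun x => ((|x| : ℝ) : ℂ))
      - (mpow A (-(1/2)) * X * mpow A (-(1/2)))).PosSemidef := by
    have h3 : cFun hZH (fun x => ((|x| : ℝ) : ℂ)) - cFun hZH (fun x => (x:ℂ))
        = cFun hZH (fun x => ((|x| : ℝ) : ℂ) - (x:ℂ)) := cFun_sub hZH _ _
    rw [cFun_id hZH] at h3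
    rw [h3]
    refine cFun_posSemidef hZH fun i => ?_
    rw [← Complex.ofReal_sub, Complex.zero_le_real]
    have := abs_nonneg (hZH.eigenvalues i)
    have := le_abs_self (hZH.eigenvalues i)
    linarith
  have habsm : (cFun hZH (fun x => ((|x| : ℝ) : ℂ))
      + (mpow A (-(1/2)) * X * mpow A (-(1/2)))).PosSemidef := by
    have h3 : cFun hZH (fun x => ((|x| : ℝ) : ℂ)) + cFun hZH (fun x => (x:ℂ))
        = cFun hZH (fun x => ((|x| : ℝ) : ℂ) + (x:ℂ)) := cFun_add hZH _ _
    rw [cFun_id hZH] at h3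
    rw [h3]
    refine cFun_posSemidef hZH fun i => ?_
    rw [← Complex.ofReal_add, Complex.zero_le_real]
    have := neg_abs_le (hZH.eigenvalues i)
    linarith
  -- Rr ± Z PSD
  have hRm : (mpow (mpow A (-(1/2)) * B * mpow A (-(1/2))) (1/2)
      - mpow A (-(1/2)) * X * mpow A (-(1/2))).PosSemidef := by
    have := hkey.add habsp
    have heq : mpow (mpow A (-(1/2)) * B * mpow A (-(1/2))) (1/2)
        - cFun hZH (fun x => ((|x| : ℝ) : ℂ))
        + (cFun hZH (fun x => ((|x| : ℝ) : ℂ)) - mpow A (-(1/2)) * X * mpow A (-(1/2)))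
        = mpow (mpow A (-(1/2)) * B * mpow A (-(1/2))) (1/2)
          - mpow A (-(1/2)) * X * mpow A (-(1/2)) := by abel
    rwa [heq] at this
  have hRp : (mpow (mpow A (-(1/2)) * B * mpow A (-(1/2))) (1/2)
      + mpow A (-(1/2)) * X * mpow A (-(1/2))).PosSemidef := by
    have := hkey.add habsm
    have heq : mpow (mpow A (-(1/2)) * B * mpow A (-(1/2))) (1/2)
        - cFun hZH (fun x => ((|x| : ℝ) : ℂ))
        + (cFun hZH (fun x => ((|x| : ℝ) : ℂ)) + mpow A (-(1/2)) * X * mpow A (-(1/2)))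
        = mpow (mpow A (-(1/2)) * B * mpow A (-(1/2))) (1/2)
          + mpow A (-(1/2)) * X * mpow A (-(1/2)) := by abel
    rwa [heq] at this
  -- conjugate by Ar
  have hgm : gm A B (1/2) = mpow A (1/2)
      * mpow (mpow A (-(1/2)) * B * mpow A (-(1/2))) (1/2) * mpow A (1/2) := rfl
  have hArZAr : mpow A (1/2) * (mpow A (-(1/2)) * X * mpow A (-(1/2))) * mpow A (1/2)
      = X := by
    calc mpow A (1/2) * (mpow A (-(1/2)) * X * mpow A (-(1/2))) * mpow A (1/2)
        = (mpow A (1/2) * mpow A (-(1/2))) * X * (mpow A (-(1/2)) * mpow A (1/2)) := by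
          simp only [Matrix.mul_assoc]
      _ = X := by rw [hArAi, hAiAr, Matrix.one_mul, Matrix.mul_one]
  refine ⟨?_, ?_, ?_⟩
  · rw [hgm]
    have := posDef_conj' hRrPD hArUnit
    rwa [hArH.eq] at this
  · have hc := hRm.conjTranspose_mul_mul_same (mpow A (1/2))
    rw [hArH.eq] at hc
    have heq : mpow A (1/2) * (mpow (mpow A (-(1/2)) * B * mpow A (-(1/2))) (1/2)
        - mpow A (-(1/2)) * X * mpow A (-(1/2))) * mpow A (1/2)
        = gm A B (1/2) - X := by
      rw [Matrix.mul_sub, Matrix.sub_mul, hArZAr, hgm]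
    rwa [heq] at hc
  · have hc := hRp.conjTranspose_mul_mul_same (mpow A (1/2))
    rw [hArH.eq] at hc
    have heq : mpow A (1/2) * (mpow (mpow A (-(1/2)) * B * mpow A (-(1/2))) (1/2)
        + mpow A (-(1/2)) * X * mpow A (-(1/2))) * mpow A (1/2)
        = gm A B (1/2) + X := by
      rw [Matrix.mul_add, Matrix.add_mul, hArZAr, hgm]
    rwa [heq] at hc

end Final

/-- if `A, B` are positive definite, `X` is Hermitian, and the block matrix
`[[A, X], [X, B]]` is positive semidefinite, then `|||X||| ≤ |||A #_{1/2} B|||` for every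
unitarily invariant norm. -/
theorem stmt17 {n : ℕ} (A B X : Matrix (Fin n) (Fin n) ℂ) (hA : A.PosDef) (hB : B.PosDef)
    (hX : X.IsHermitian) (hblock : (Matrix.fromBlocks A X X B).PosSemidef)
    (NN : UnitarilyInvariantNorm n) :
    NN.N X ≤ NN.N (gm A B (1 / 2)) := by
  obtain ⟨hYpd, hYm, hYp⟩ := gm_dominates hA hB hX hblock
  -- the sign functions
  have hPQ : cFun hX (fun x => if 0 ≤ x then (1:ℂ) else 0)
      + cFun hX (fun x => if 0 ≤ x then (0:ℂ) else 1) = 1 := by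
    rw [cFun_add]
    refine (cFun_congr hX fun i => ?_).trans (cFun_one hX)
    by_cases h : 0 ≤ hX.eigenvalues i <;> simp [h]
  have hW : cFun hX (fun x => if 0 ≤ x then (1:ℂ) else -1)
      = cFun hX (fun x => if 0 ≤ x then (1:ℂ) else 0)
        - cFun hX (fun x => if 0 ≤ x then (0:ℂ) else 1) := by
    rw [cFun_sub]
    refine cFun_congr hX fun i => ?_
    by_cases h : 0 ≤ hX.eigenvalues i <;> simp [h]
  have hPH : (cFun hX (fun x => if 0 ≤ x then (1:ℂ) else 0)).IsHermitian :=
    cFun_isHermitian hX fun i => by by_cases h : 0 ≤ hX.eigenvalues i <;> simp [h]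
  have hQH : (cFun hX (fun x => if 0 ≤ x then (0:ℂ) else 1)).IsHermitian :=
    cFun_isHermitian hX fun i => by by_cases h : 0 ≤ hX.eigenvalues i <;> simp [h]
  have hWH : (cFun hX (fun x => if 0 ≤ x then (1:ℂ) else -1)).IsHermitian :=
    cFun_isHermitian hX fun i => by by_cases h : 0 ≤ hX.eigenvalues i <;> simp [h]
  have hWun : star (cFun hX (fun x => if 0 ≤ x then (1:ℂ) else -1))
      * cFun hX (fun x => if 0 ≤ x then (1:ℂ) else -1) = 1 := by
    rw [Matrix.star_eq_conjTranspose, cFun_conjTranspose, cFun_mul]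
    refine (cFun_congr hX fun i => ?_).trans (cFun_one hX)
    by_cases h : 0 ≤ hX.eigenvalues i <;> simp [h]
  -- W * X = |X|
  have hWX : cFun hX (fun x => if 0 ≤ x then (1:ℂ) else -1) * X
      = cFun hX (fun x => ((|x| : ℝ) : ℂ)) := by
    have h3 : cFun hX (fun x => if 0 ≤ x then (1:ℂ) else -1) * cFun hX (fun x => (x:ℂ))
        = cFun hX (fun x => ((|x| : ℝ) : ℂ)) := by
      rw [cFun_mul]
      refine cFun_congr hX fun i => ?_
      by_cases h : 0 ≤ hX.eigenvalues i
      · simp [h, abs_of_nonneg h]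
      · simp [h, abs_of_neg (lt_of_not_ge h)]
    rwa [cFun_id hX] at h3
  have hNXa : NN.N (cFun hX (fun x => ((|x| : ℝ) : ℂ))) = NN.N X := by
    have h5 := N_unitary_left NN X hWun
    rwa [hWX] at h5
  -- P X P - Q X Q = |X|
  have h4 : cFun hX (fun x => if 0 ≤ x then (1:ℂ) else 0) * X
        * cFun hX (fun x => if 0 ≤ x then (1:ℂ) else 0)
      - cFun hX (fun x => if 0 ≤ x then (0:ℂ) else 1) * X
        * cFun hX (fun x => if 0 ≤ x then (0:ℂ) else 1)
      = cFun hX (fun x => ((|x| : ℝ) : ℂ)) := by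
    have h3 : cFun hX (fun x => if 0 ≤ x then (1:ℂ) else 0) * cFun hX (fun x => (x:ℂ))
        * cFun hX (fun x => if 0 ≤ x then (1:ℂ) else 0)
      - cFun hX (fun x => if 0 ≤ x then (0:ℂ) else 1) * cFun hX (fun x => (x:ℂ))
        * cFun hX (fun x => if 0 ≤ x then (0:ℂ) else 1)
        = cFun hX (fun x => ((|x| : ℝ) : ℂ)) := by
      rw [cFun_mul, cFun_mul, cFun_mul, cFun_mul, cFun_sub]
      refine cFun_congr hX fun i => ?_
      by_cases h : 0 ≤ hX.eigenvalues i
      · simp [h, abs_of_nonneg h]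
      · simp [h, abs_of_neg (lt_of_not_ge h)]
    rwa [cFun_id hX] at h3
  -- the two PSD conjugations
  have hpp : (cFun hX (fun x => if 0 ≤ x then (1:ℂ) else 0) * (gm A B (1/2) - X)
      * cFun hX (fun x => if 0 ≤ x then (1:ℂ) else 0)).PosSemidef := by
    have := hYm.conjTranspose_mul_mul_same (cFun hX (fun x => if 0 ≤ x then (1:ℂ) else 0))
    rwa [hPH.eq] at this
  have hqq : (cFun hX (fun x => if 0 ≤ x then (0:ℂ) else 1) * (gm A B (1/2) + X)
      * cFun hX (fun x => if 0 ≤ x then (0:ℂ) else 1)).PosSemidef := by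
    have := hYp.conjTranspose_mul_mul_same (cFun hX (fun x => if 0 ≤ x then (0:ℂ) else 1))
    rwa [hQH.eq] at this
  -- key algebraic identity
  have hE : gm A B (1/2)
      + cFun hX (fun x => if 0 ≤ x then (1:ℂ) else -1) * gm A B (1/2)
        * cFun hX (fun x => if 0 ≤ x then (1:ℂ) else -1)
      - (cFun hX (fun x => ((|x| : ℝ) : ℂ)) + cFun hX (fun x => ((|x| : ℝ) : ℂ)))
      = (cFun hX (fun x => if 0 ≤ x then (1:ℂ) else 0) * (gm A B (1/2) - X)
          * cFun hX (fun x => if 0 ≤ x then (1:ℂ) else 0)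
        + cFun hX (fun x => if 0 ≤ x then (0:ℂ) else 1) * (gm A B (1/2) + X)
          * cFun hX (fun x => if 0 ≤ x then (0:ℂ) else 1))
      + (cFun hX (fun x => if 0 ≤ x then (1:ℂ) else 0) * (gm A B (1/2) - X)
          * cFun hX (fun x => if 0 ≤ x then (1:ℂ) else 0)
        + cFun hX (fun x => if 0 ≤ x then (0:ℂ) else 1) * (gm A B (1/2) + X)
          * cFun hX (fun x => if 0 ≤ x then (0:ℂ) else 1)) := by
    rw [hW, ← h4]
    have h1 : cFun hX (fun x => if 0 ≤ x then (0:ℂ) else 1)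
        = 1 - cFun hX (fun x => if 0 ≤ x then (1:ℂ) else 0) := by
      rw [← hPQ]; abel
    rw [h1]
    noncomm_ring
  -- PSD of W Y W and positivity of Y + W Y W
  have hWYW : (cFun hX (fun x => if 0 ≤ x then (1:ℂ) else -1) * gm A B (1/2)
      * cFun hX (fun x => if 0 ≤ x then (1:ℂ) else -1)).PosSemidef := by
    have := hYpd.posSemidef.conjTranspose_mul_mul_same
      (cFun hX (fun x => if 0 ≤ x then (1:ℂ) else -1))
    rwa [hWH.eq] at this
  have hY2pd : (gm A B (1/2) + cFun hX (fun x => if 0 ≤ x then (1:ℂ) else -1) * gm A B (1/2)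
      * cFun hX (fun x => if 0 ≤ x then (1:ℂ) else -1)).PosDef :=
    hYpd.add_posSemidef hWYW
  have hXa2PSD : (cFun hX (fun x => ((|x| : ℝ) : ℂ))
      + cFun hX (fun x => ((|x| : ℝ) : ℂ))).PosSemidef := by
    rw [cFun_add]
    refine cFun_posSemidef hX fun i => ?_
    rw [← Complex.ofReal_add, Complex.zero_le_real]
    positivity
  have hdiff : (gm A B (1/2) + cFun hX (fun x => if 0 ≤ x then (1:ℂ) else -1) * gm A B (1/2)
      * cFun hX (fun x => if 0 ≤ x then (1:ℂ) else -1)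
      - (cFun hX (fun x => ((|x| : ℝ) : ℂ))
        + cFun hX (fun x => ((|x| : ℝ) : ℂ)))).PosSemidef := by
    rw [hE]
    exact (hpp.add hqq).add (hpp.add hqq)
  have hmain := N_mono NN hXa2PSD hY2pd hdiff
  -- unfold the norms
  have hXa2 : NN.N (cFun hX (fun x => ((|x| : ℝ) : ℂ)) + cFun hX (fun x => ((|x| : ℝ) : ℂ)))
      = 2 * NN.N X := by
    rw [← two_smul ℂ (cFun hX (fun x => ((|x| : ℝ) : ℂ))), NN.smul_eq, hNXa]
    norm_num
  have hY2 : NN.N (gm A B (1/2) + cFun hX (fun x => if 0 ≤ x then (1:ℂ) else -1) * gm A B (1/2)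
      * cFun hX (fun x => if 0 ≤ x then (1:ℂ) else -1)) ≤ 2 * NN.N (gm A B (1/2)) := by
    have t1 := NN.add_le (gm A B (1/2))
      (cFun hX (fun x => if 0 ≤ x then (1:ℂ) else -1) * gm A B (1/2)
        * cFun hX (fun x => if 0 ≤ x then (1:ℂ) else -1))
    have t2 := N_unitary_conj' NN (gm A B (1/2)) hWun
    linarith
  rw [hXa2] at hmain
  have : NN.N (gm A B (1/2)) = NN.N (gm A B (1 / 2)) := rfl
  linarith
end
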